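/- Let (U_i, X_i, Y_i, Z_i) for i = 1..n arise from n uses of a memoryless channel where Y is less noisy than Z, with U_i = (M_0, Z^{i-1}). Then ∑_{i=1}^n [I(M_1; Y_i | M_0, Y_{i+1}^n) - I(M_1; Z_i | M_0, Z^{i-1})] ≤ ∑_{i=1}^n [I(X_i; Y_i | U_i) - I(X_i; Z_i | U_i)]. -/

import Mathlib

open scoped BigOperators Classical

namespace Secrecy

/-- `-x log₂ x`, with the convention `0 log 0 = 0`. -/
noncomputable def nml (x : ℝ) : ℝ := - x * Real.logb 2 x

variable {Ω : Type} [Fintype Ω]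

/-- Probability of an event under a pmf on a finite sample space. -/
noncomputable def pr (p : Ω → ℝ) (s : Ω → Prop) : ℝ := ∑ ω, if s ω then p ω else 0

/-- `p` is a probability mass function. -/
def IsPMF (p : Ω → ℝ) : Prop := (∀ ω, 0 ≤ p ω) ∧ ∑ ω, p ω = 1

/-- Shannon entropy (base 2) of a finitely valued random variable. -/
noncomputable def H {A : Type} [Fintype A] (p : Ω → ℝ) (X : Ω → A) : ℝ :=
  ∑ a, nml (pr p (fun ω => X ω = a))

/-- Conditional entropy `H(X|Y) = H(X,Y) - H(Y)`. -/
noncomputable def Hc {A B : Type} [Fintype A] [Fintype B] (p : Ω → ℝ)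
    (X : Ω → A) (Y : Ω → B) : ℝ :=
  H p (fun ω => (X ω, Y ω)) - H p Y

/-- Mutual information `I(X;Y)`. -/
noncomputable def MI {A B : Type} [Fintype A] [Fintype B] (p : Ω → ℝ)
    (X : Ω → A) (Y : Ω → B) : ℝ :=
  H p X + H p Y - H p (fun ω => (X ω, Y ω))

/-- Conditional mutual information `I(X;Y|Z)`. -/
noncomputable def CMI {A B C : Type} [Fintype A] [Fintype B] [Fintype C]
    (p : Ω → ℝ) (X : Ω → A) (Y : Ω → B) (Z : Ω → C) : ℝ :=
  H p (fun ω => (X ω, Z ω)) + H p (fun ω => (Y ω, Z ω))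
    - H p (fun ω => (X ω, Y ω, Z ω)) - H p Z

/-- Markov chain `X → Y → Z` : `X` and `Z` are conditionally independent given `Y`. -/
def Markov {A B C : Type} (p : Ω → ℝ) (X : Ω → A) (Y : Ω → B) (Z : Ω → C) : Prop :=
  ∀ a b c,
    pr p (fun ω => X ω = a ∧ Y ω = b ∧ Z ω = c) * pr p (fun ω => Y ω = b) =
    pr p (fun ω => X ω = a ∧ Y ω = b) * pr p (fun ω => Y ω = b ∧ Z ω = c)

/-- The past `Y^{i-1}` of a random sequence, as a finitely valued random variable. -/
noncomputable def past {n : ℕ} {A : Type} (Y : Ω → Fin n → A) (i : Fin n) :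
    Ω → (Fin n → Option A) :=
  fun ω j => if j < i then some (Y ω j) else none

/-- The future `Z_{i+1}^n` of a random sequence, as a finitely valued random variable. -/
noncomputable def future {n : ℕ} {A : Type} (Z : Ω → Fin n → A) (i : Fin n) :
    Ω → (Fin n → Option A) :=
  fun ω j => if i < j then some (Z ω j) else none

/-- A discrete memoryless channel from `A` to `B`: a conditional pmf. -/
def IsChannel {A B : Type} [Fintype B] (W : A → B → ℝ) : Prop :=
  (∀ a b, 0 ≤ W a b) ∧ ∀ a, ∑ b, W a b = 1

/-- Joint pmf of an input distribution `q(u,x)` and a channel `W(o|x)`. -/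
noncomputable def joint {U X O : Type} (q : U × X → ℝ) (W : X → O → ℝ) :
    U × X × O → ℝ :=
  fun w => q (w.1, w.2.1) * W w.2.1 w.2.2

/-- `Y` is less noisy than `Z` for the channel `W(y,z|x)` : for every auxiliary `U` with
`U → X → (Y,Z)`, i.e. every joint input pmf `q(u,x)`, `I(U;Y) ≥ I(U;Z)`. -/
def LessNoisy {X Y Z : Type} [Fintype X] [Fintype Y] [Fintype Z]
    (W : X → Y × Z → ℝ) : Prop :=
  ∀ (U : Type) (_ : Fintype U) (q : U × X → ℝ), IsPMF q →
    MI (joint q W) (fun w => w.1) (fun w => w.2.2.2) ≤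
    MI (joint q W) (fun w => w.1) (fun w => w.2.2.1)

/-- `Y` is more capable than `Z` for the channel `W(y,z|x)` : `I(X;Y) ≥ I(X;Z)` for
every input pmf `q(x)`. -/
def MoreCapable {X Y Z : Type} [Fintype X] [Fintype Y] [Fintype Z]
    (W : X → Y × Z → ℝ) : Prop :=
  ∀ q : X → ℝ, IsPMF q →
    MI (fun w : X × Y × Z => q w.1 * W w.1 w.2) (fun w => w.1) (fun w => w.2.2) ≤
    MI (fun w : X × Y × Z => q w.1 * W w.1 w.2) (fun w => w.1) (fun w => w.2.1)

/-- Conditional pmf given an event. -/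
noncomputable def condp (p : Ω → ℝ) (s : Ω → Prop) : Ω → ℝ :=
  fun ω => if s ω then p ω / pr p s else 0

/-- Number of occurrences of `v` in the sequence `vs`. -/
noncomputable def Nocc {n : ℕ} {V : Type} (vs : Fin n → V) (v : V) : ℕ :=
  (Finset.univ.filter (fun i => vs i = v)).card

/-- Binary entropy (base 2). -/
noncomputable def binEnt (γ : ℝ) : ℝ := nml γ + nml (1 - γ)

end Secrecy

namespace Secrecy
variable {Ω : Type} [Fintype Ω]

theorem pr_congr {p : Ω → ℝ} {s t : Ω → Prop} (h : ∀ ω, s ω ↔ t ω) : pr p s = pr p t := by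
  unfold pr; exact Finset.sum_congr rfl fun ω _ => by rw [if_congr (h ω) rfl rfl]

theorem pr_nonneg {p : Ω → ℝ} (hp : ∀ ω, 0 ≤ p ω) (s : Ω → Prop) : 0 ≤ pr p s := by
  refine Finset.sum_nonneg fun ω _ => ?_
  split
  · exact hp ω
  · exact le_refl 0

theorem pr_mono {p : Ω → ℝ} (hp : ∀ ω, 0 ≤ p ω) {s t : Ω → Prop}
    (h : ∀ ω, s ω → t ω) : pr p s ≤ pr p t := by
  refine Finset.sum_le_sum fun ω _ => ?_
  by_cases hs : s ω
  · rw [if_pos hs, if_pos (h ω hs)]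
  · rw [if_neg hs]; split
    · exact hp ω
    · exact le_refl 0

theorem pr_false {p : Ω → ℝ} {s : Ω → Prop} (h : ∀ ω, ¬ s ω) : pr p s = 0 := by
  unfold pr
  refine Finset.sum_eq_zero fun ω _ => if_neg (h ω)

theorem pr_partition {Bt : Type} [Fintype Bt] {p : Ω → ℝ} (s : Ω → Prop) (B : Ω → Bt) :
    pr p s = ∑ b, pr p (fun ω => s ω ∧ B ω = b) := by
  unfold pr
  rw [Finset.sum_comm]
  refine Finset.sum_congr rfl fun ω _ => ?_
  by_cases hs : s ω
  · simp only [hs, true_and]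
    rw [Finset.sum_ite_eq Finset.univ (B ω) (fun _ => p ω)]
    simp [hs]
  · simp [hs]

theorem pr_comp {Tt : Type} [Fintype Tt] {p : Ω → ℝ} (T : Ω → Tt) (s : Tt → Prop) :
    pr p (fun ω => s (T ω)) = ∑ t, if s t then pr p (fun ω => T ω = t) else 0 := by
  unfold pr
  have : ∀ t : Tt, (if s t then (∑ ω, if T ω = t then p ω else 0) else 0)
      = ∑ ω, if T ω = t ∧ s t then p ω else 0 := by
    intro t; split
    · rename_i h; refine Finset.sum_congr rfl fun ω _ => ?_; simp [h]
    · rename_i h; symm; refine Finset.sum_eq_zero fun ω _ => ?_; simp [h]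
  simp only [this]
  rw [Finset.sum_comm]
  refine Finset.sum_congr rfl fun ω _ => ?_
  simp only [ite_and]
  rw [Finset.sum_ite_eq Finset.univ (T ω) (fun t => if s t then p ω else 0)]
  simp

theorem pr_total {Tt : Type} [Fintype Tt] {p : Ω → ℝ} (T : Ω → Tt) :
    ∑ t, pr p (fun ω => T ω = t) = ∑ ω, p ω := by
  have := pr_comp (p := p) T (fun _ => True)
  simp only [if_true] at this
  rw [← this]
  unfold pr; simp

theorem sum_condp {p : Ω → ℝ} {s : Ω → Prop} (h : pr p s ≠ 0) :
    ∑ ω, condp p s ω = 1 := by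
  unfold condp
  have : ∀ ω, (if s ω then p ω / pr p s else 0) = (if s ω then p ω else 0) / pr p s := by
    intro ω; split <;> simp
  simp only [this, ← Finset.sum_div]
  exact div_self h

theorem condp_nonneg {p : Ω → ℝ} (hp0 : ∀ ω, 0 ≤ p ω) (s : Ω → Prop) (hps : 0 ≤ pr p s) :
    ∀ ω, 0 ≤ condp p s ω := by
  intro ω; unfold condp; split
  · exact div_nonneg (hp0 ω) hps
  · exact le_refl 0

theorem pr_condp {p : Ω → ℝ} (t s : Ω → Prop) :
    pr (condp p t) s = pr p (fun ω => s ω ∧ t ω) / pr p t := by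
  unfold pr condp
  rw [Finset.sum_div]
  refine Finset.sum_congr rfl fun ω _ => ?_
  by_cases hs : s ω <;> by_cases ht : t ω <;> simp [hs, ht, pr]

theorem nml_zero : nml 0 = 0 := by simp [nml]

theorem nml_mul (a b : ℝ) : nml (a * b) = a * nml b + b * nml a := by
  rcases eq_or_ne a 0 with ha | ha
  · simp [ha, nml]
  rcases eq_or_ne b 0 with hb | hb
  · simp [hb, nml]
  unfold nml Real.logb
  rw [Real.log_mul ha hb]
  ring

end Secrecy
set_option linter.unusedSectionVars false

namespace Secrecy
variable {Ω : Type} [Fintype Ω]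

theorem H_comp_inj {A B : Type} [Fintype A] [Fintype B] (p : Ω → ℝ) (X : Ω → A)
    (f : A → B) (hf : Function.Injective f) :
    H p (fun ω => f (X ω)) = H p X := by
  unfold H
  calc ∑ b : B, nml (pr p fun ω => f (X ω) = b)
      = ∑ b ∈ Finset.univ.image f, nml (pr p fun ω => f (X ω) = b) := by
        symm
        apply Finset.sum_subset (Finset.subset_univ _)
        intro b _ hb
        have hff : ∀ ω, ¬ (f (X ω) = b) := fun ω h =>
          hb (Finset.mem_image.mpr ⟨X ω, Finset.mem_univ _, h⟩)
        rw [pr_false hff, nml_zero]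
    _ = ∑ a : A, nml (pr p fun ω => f (X ω) = f a) :=
        Finset.sum_image (fun x _ y _ h => hf h)
    _ = ∑ a : A, nml (pr p fun ω => X ω = a) :=
        Finset.sum_congr rfl fun a _ => by
          congr 1
          exact pr_congr fun ω => by rw [hf.eq_iff]

/-- `X` and `Y` determine each other. -/
def Det {A B : Type} (X : Ω → A) (Y : Ω → B) : Prop :=
  ∃ f : A → B, ∃ g : B → A, (∀ ω, f (X ω) = Y ω) ∧ (∀ ω, g (Y ω) = X ω)

theorem Det.symm {A B : Type} {X : Ω → A} {Y : Ω → B} (h : Det X Y) : Det Y X := by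
  obtain ⟨f, g, hf, hg⟩ := h
  exact ⟨g, f, hg, hf⟩

theorem Det.pair {A B A' B' : Type} {X : Ω → A} {Y : Ω → B} {X' : Ω → A'} {Y' : Ω → B'}
    (h1 : Det X X') (h2 : Det Y Y') :
    Det (fun ω => (X ω, Y ω)) (fun ω => (X' ω, Y' ω)) := by
  obtain ⟨f1, g1, hf1, hg1⟩ := h1
  obtain ⟨f2, g2, hf2, hg2⟩ := h2
  exact ⟨fun q => (f1 q.1, f2 q.2), fun q => (g1 q.1, g2 q.2),
    fun ω => by simp [hf1, hf2], fun ω => by simp [hg1, hg2]⟩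

theorem Det.refl {A : Type} (X : Ω → A) : Det X X := ⟨id, id, fun _ => rfl, fun _ => rfl⟩

theorem H_det {A B : Type} [Fintype A] [Fintype B] (p : Ω → ℝ) {X : Ω → A} {Y : Ω → B}
    (h : Det X Y) : H p X = H p Y := by
  obtain ⟨f, g, hf, hg⟩ := h
  have h1 : H p (fun ω => (X ω, Y ω)) = H p X := by
    have e : (fun ω => (X ω, Y ω)) = fun ω => ((fun a => (a, f a)) (X ω)) :=
      funext fun ω => by simp [hf ω]
    rw [e]
    exact H_comp_inj p X (fun a => (a, f a)) (fun a b hab => congrArg Prod.fst hab)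
  have h2 : H p (fun ω => (Y ω, X ω)) = H p Y := by
    have e : (fun ω => (Y ω, X ω)) = fun ω => ((fun b => (b, g b)) (Y ω)) :=
      funext fun ω => by simp [hg ω]
    rw [e]
    exact H_comp_inj p Y (fun b => (b, g b)) (fun a b hab => congrArg Prod.fst hab)
  have h3 : H p (fun ω => (X ω, Y ω)) = H p (fun ω => (Y ω, X ω)) := by
    have e : (fun ω => (Y ω, X ω)) = fun ω => Prod.swap ((fun ω' => (X ω', Y ω')) ω) := rfl
    rw [e]
    exact (H_comp_inj p (fun ω => (X ω, Y ω)) Prod.swap Prod.swap_injective).symm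
  rw [← h1, h3, h2]

theorem pr_pair_eq {A Ct : Type} {p : Ω → ℝ} (Xv : Ω → A) (Cv : Ω → Ct) (q : A × Ct) :
    pr p (fun ω => (Xv ω, Cv ω) = q) = pr p (fun ω => Xv ω = q.1 ∧ Cv ω = q.2) :=
  pr_congr fun ω => by simp [Prod.ext_iff]

theorem pr_mul_cond {A Ct : Type} {p : Ω → ℝ} (hp0 : ∀ ω, 0 ≤ p ω)
    (X : Ω → A) (C : Ω → Ct) (a : A) (c : Ct) :
    pr p (fun ω => X ω = a ∧ C ω = c)
      = pr p (fun ω => C ω = c) * pr (condp p (fun ω => C ω = c)) (fun ω => X ω = a) := by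
  rw [pr_condp]
  rcases eq_or_ne (pr p (fun ω => C ω = c)) 0 with h | h
  · rw [h, zero_mul]
    have hle : pr p (fun ω => X ω = a ∧ C ω = c) ≤ pr p (fun ω => C ω = c) :=
      pr_mono hp0 fun ω hω => hω.2
    have hge : 0 ≤ pr p (fun ω => X ω = a ∧ C ω = c) := pr_nonneg hp0 _
    linarith
  · field_simp

theorem H_cond_decomp {A Ct : Type} [Fintype A] [Fintype Ct] {p : Ω → ℝ}
    (hp0 : ∀ ω, 0 ≤ p ω) (X : Ω → A) (C : Ω → Ct) :
    H p (fun ω => (X ω, C ω))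
      = H p C + ∑ c, pr p (fun ω => C ω = c) * H (condp p (fun ω => C ω = c)) X := by
  unfold H
  rw [Fintype.sum_prod_type, Finset.sum_comm, ← Finset.sum_add_distrib]
  refine Finset.sum_congr rfl fun c _ => ?_
  have key : ∀ a : A, pr p (fun ω => (X ω, C ω) = (a, c))
      = pr p (fun ω => C ω = c) * pr (condp p (fun ω => C ω = c)) (fun ω => X ω = a) :=
    fun a => by rw [pr_pair_eq X C (a, c)]; exact pr_mul_cond hp0 X C a c
  simp only [key, nml_mul]
  rw [Finset.sum_add_distrib, ← Finset.mul_sum, ← Finset.sum_mul]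
  have hH : H (condp p (fun ω => C ω = c)) X
      = ∑ a : A, nml (pr (condp p fun ω => C ω = c) fun ω => X ω = a) := rfl
  rcases eq_or_ne (pr p (fun ω => C ω = c)) 0 with h0 | h0
  · simp [h0, nml_zero]
  · rw [pr_total, sum_condp h0, one_mul]
    ring

theorem CMI_cond_decomp {A B Ct : Type} [Fintype A] [Fintype B] [Fintype Ct] {p : Ω → ℝ}
    (hp0 : ∀ ω, 0 ≤ p ω) (X : Ω → A) (Y : Ω → B) (C : Ω → Ct) :
    CMI p X Y C = ∑ c, pr p (fun ω => C ω = c) * MI (condp p (fun ω => C ω = c)) X Y := by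
  unfold CMI
  have h3 : H p (fun ω => (X ω, Y ω, C ω)) = H p (fun ω => ((fun ω' => (X ω', Y ω')) ω, C ω)) :=
    H_det p ⟨fun q => ((q.1, q.2.1), q.2.2), fun q => (q.1.1, q.1.2, q.2),
      fun ω => rfl, fun ω => rfl⟩
  rw [h3, H_cond_decomp hp0 X C, H_cond_decomp hp0 Y C,
    H_cond_decomp hp0 (fun ω => (X ω, Y ω)) C]
  have key : ∑ c, pr p (fun ω => C ω = c) * MI (condp p (fun ω => C ω = c)) X Y
      = (∑ c, pr p (fun ω => C ω = c) * H (condp p (fun ω => C ω = c)) X)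
        + (∑ c, pr p (fun ω => C ω = c) * H (condp p (fun ω => C ω = c)) Y)
        - (∑ c, pr p (fun ω => C ω = c) * H (condp p (fun ω => C ω = c)) (fun ω => (X ω, Y ω))) := by
    rw [← Finset.sum_add_distrib, ← Finset.sum_sub_distrib]
    exact Finset.sum_congr rfl fun c _ => by unfold MI; ring
  rw [key]
  ring

theorem MI_eq_of_pair_dist {Ω' A B : Type} [Fintype Ω'] [Fintype A] [Fintype B]
    {p : Ω → ℝ} {p' : Ω' → ℝ} {X : Ω → A} {Y : Ω → B} {X' : Ω' → A} {Y' : Ω' → B}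
    (h : ∀ a b, pr p (fun ω => X ω = a ∧ Y ω = b) = pr p' (fun ω => X' ω = a ∧ Y' ω = b)) :
    MI p X Y = MI p' X' Y' := by
  have hX : H p X = H p' X' := by
    unfold H
    refine Finset.sum_congr rfl fun a _ => ?_
    congr 1
    rw [pr_partition (fun ω => X ω = a) Y, pr_partition (fun ω => X' ω = a) Y']
    exact Finset.sum_congr rfl fun b _ => h a b
  have hY : H p Y = H p' Y' := by
    unfold H
    refine Finset.sum_congr rfl fun b _ => ?_
    congr 1
    rw [pr_partition (fun ω => Y ω = b) X, pr_partition (fun ω => Y' ω = b) X']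
    refine Finset.sum_congr rfl fun a _ => ?_
    calc pr p (fun ω => Y ω = b ∧ X ω = a)
        = pr p (fun ω => X ω = a ∧ Y ω = b) := pr_congr fun ω => and_comm
      _ = pr p' (fun ω => X' ω = a ∧ Y' ω = b) := h a b
      _ = pr p' (fun ω => Y' ω = b ∧ X' ω = a) := pr_congr fun ω => and_comm
  have hXY : H p (fun ω => (X ω, Y ω)) = H p' (fun ω => (X' ω, Y' ω)) := by
    unfold H
    refine Finset.sum_congr rfl fun q _ => ?_
    congr 1
    rw [pr_pair_eq X Y q, pr_pair_eq X' Y' q]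
    exact h q.1 q.2
  unfold MI
  rw [hX, hY, hXY]

theorem MI_indep_zero {A B : Type} [Fintype A] [Fintype B] {p : Ω → ℝ}
    (hsum : ∑ ω, p ω = 1)
    (X : Ω → A) (Y : Ω → B)
    (hind : ∀ a b, pr p (fun ω => X ω = a ∧ Y ω = b)
      = pr p (fun ω => X ω = a) * pr p (fun ω => Y ω = b)) :
    MI p X Y = 0 := by
  have hA1 : ∑ a, pr p (fun ω => X ω = a) = 1 := by rw [pr_total]; exact hsum
  have hB1 : ∑ b, pr p (fun ω => Y ω = b) = 1 := by rw [pr_total]; exact hsum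
  have hXY : H p (fun ω => (X ω, Y ω)) = H p X + H p Y := by
    unfold H
    rw [Fintype.sum_prod_type]
    have e : ∀ a b, nml (pr p fun ω => (X ω, Y ω) = (a, b))
        = pr p (fun ω => X ω = a) * nml (pr p (fun ω => Y ω = b))
          + pr p (fun ω => Y ω = b) * nml (pr p (fun ω => X ω = a)) := by
      intro a b
      rw [pr_pair_eq X Y (a, b)]
      dsimp only
      rw [hind a b, nml_mul]
    simp only [e]
    have inner : ∀ a : A, ∑ b : B, (pr p (fun ω => X ω = a) * nml (pr p (fun ω => Y ω = b))
          + pr p (fun ω => Y ω = b) * nml (pr p (fun ω => X ω = a)))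
        = pr p (fun ω => X ω = a) * (∑ b, nml (pr p (fun ω => Y ω = b)))
          + (∑ b, pr p (fun ω => Y ω = b)) * nml (pr p (fun ω => X ω = a)) := by
      intro a
      rw [Finset.sum_add_distrib, ← Finset.mul_sum, ← Finset.sum_mul]
    simp only [inner, hB1, one_mul]
    rw [Finset.sum_add_distrib, ← Finset.sum_mul, hA1, one_mul]
    exact add_comm _ _
  unfold MI
  rw [hXY]; ring

end Secrecy
namespace Secrecy
variable {Ω : Type} [Fintype Ω]

theorem pr_point {p : Ω → ℝ} (w0 : Ω) : pr p (fun ω => ω = w0) = p w0 := by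
  unfold pr
  rw [Finset.sum_ite_eq' Finset.univ w0 p]
  simp

theorem CMI_congr {A B C A' B' C' : Type} [Fintype A] [Fintype B] [Fintype C]
    [Fintype A'] [Fintype B'] [Fintype C'] (p : Ω → ℝ)
    {X : Ω → A} {Y : Ω → B} {Z : Ω → C} {X' : Ω → A'} {Y' : Ω → B'} {Z' : Ω → C'}
    (hX : Det X X') (hY : Det Y Y') (hZ : Det Z Z') :
    CMI p X Y Z = CMI p X' Y' Z' := by
  unfold CMI
  rw [H_det p (hX.pair hZ), H_det p (hY.pair hZ), H_det p (hX.pair (hY.pair hZ)),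
    H_det p hZ]

theorem CMI_chain {A A' B C : Type} [Fintype A] [Fintype A'] [Fintype B] [Fintype C]
    (p : Ω → ℝ) (X : Ω → A) (X' : Ω → A') (Y : Ω → B) (Z : Ω → C) :
    CMI p (fun ω => (X ω, X' ω)) Y Z
      = CMI p X Y Z + CMI p X' Y (fun ω => (Z ω, X ω)) := by
  unfold CMI
  have e1 : H p (fun ω => ((X ω, X' ω), Z ω)) = H p (fun ω => (X' ω, Z ω, X ω)) :=
    H_det p ⟨fun q => (q.1.2, q.2, q.1.1), fun q => ((q.2.2, q.1), q.2.1),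
      fun ω => rfl, fun ω => rfl⟩
  have e2 : H p (fun ω => ((X ω, X' ω), Y ω, Z ω)) = H p (fun ω => (X' ω, Y ω, Z ω, X ω)) :=
    H_det p ⟨fun q => (q.1.2, q.2.1, q.2.2, q.1.1), fun q => ((q.2.2.2, q.1), q.2.1, q.2.2.1),
      fun ω => rfl, fun ω => rfl⟩
  have e3 : H p (fun ω => (X ω, Y ω, Z ω)) = H p (fun ω => (Y ω, Z ω, X ω)) :=
    H_det p ⟨fun q => (q.2.1, q.2.2, q.1), fun q => (q.2.2, q.1, q.2.1),
      fun ω => rfl, fun ω => rfl⟩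
  have e4 : H p (fun ω => (X ω, Z ω)) = H p (fun ω => (Z ω, X ω)) :=
    H_det p ⟨fun q => (q.2, q.1), fun q => (q.2, q.1), fun ω => rfl, fun ω => rfl⟩
  rw [e1, e2, e3, e4]
  ring

theorem CMI_zero_of_indep {A B Ct : Type} [Fintype A] [Fintype B] [Fintype Ct] {p : Ω → ℝ}
    (hp : IsPMF p) (X : Ω → A) (Y : Ω → B) (C : Ω → Ct)
    (hind : ∀ a b c, pr p (fun ω => X ω = a ∧ Y ω = b ∧ C ω = c) * pr p (fun ω => C ω = c)
      = pr p (fun ω => X ω = a ∧ C ω = c) * pr p (fun ω => Y ω = b ∧ C ω = c)) :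
    CMI p X Y C = 0 := by
  rw [CMI_cond_decomp hp.1 X Y C]
  refine Finset.sum_eq_zero fun c _ => ?_
  rcases eq_or_ne (pr p (fun ω => C ω = c)) 0 with h0 | h0
  · rw [h0, zero_mul]
  · rw [MI_indep_zero (sum_condp h0) X Y, mul_zero]
    intro a b
    rw [pr_condp, pr_condp, pr_condp]
    have h1 : pr p (fun ω => (X ω = a ∧ Y ω = b) ∧ C ω = c)
        = pr p (fun ω => X ω = a ∧ Y ω = b ∧ C ω = c) := pr_congr fun ω => and_assoc
    rw [h1]
    rw [div_mul_div_comm]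
    rw [eq_div_iff (by positivity), div_mul_eq_mul_div, div_eq_iff (by positivity)]
    linear_combination (pr p fun ω => C ω = c) * hind a b c

theorem LN_step {XT YT ZT : Type}
    [Fintype XT] [Fintype YT] [Fintype ZT] {At Ct : Type} [Fintype At] [Fintype Ct]
    {p : Ω → ℝ} (hp : IsPMF p)
    {W : XT → YT × ZT → ℝ} (hLN : LessNoisy W)
    (C : Ω → Ct) (A : Ω → At) (X : Ω → XT) (Y : Ω → YT) (Z : Ω → ZT)
    (hCA : ∀ c a x y z,
      pr p (fun ω => C ω = c ∧ A ω = a ∧ X ω = x ∧ Y ω = y ∧ Z ω = z)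
        = pr p (fun ω => C ω = c ∧ A ω = a ∧ X ω = x) * W x (y, z)) :
    CMI p A Z C ≤ CMI p A Y C := by
  rw [CMI_cond_decomp hp.1 A Z C, CMI_cond_decomp hp.1 A Y C]
  refine Finset.sum_le_sum fun c _ => ?_
  rcases eq_or_ne (pr p (fun ω => C ω = c)) 0 with h0 | h0
  · rw [h0, zero_mul, zero_mul]
  · refine mul_le_mul_of_nonneg_left ?_ (pr_nonneg hp.1 _)
    set pc := condp p (fun ω => C ω = c) with hpcdef
    have hpc0 : ∀ ω, 0 ≤ pc ω := condp_nonneg hp.1 _ (pr_nonneg hp.1 _)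
    -- conditional memorylessness
    have hcond : ∀ a x y z, pr pc (fun ω => A ω = a ∧ X ω = x ∧ Y ω = y ∧ Z ω = z)
        = pr pc (fun ω => A ω = a ∧ X ω = x) * W x (y, z) := by
      intro a x y z
      rw [hpcdef, pr_condp, pr_condp]
      have r1 : pr p (fun ω => (A ω = a ∧ X ω = x ∧ Y ω = y ∧ Z ω = z) ∧ C ω = c)
          = pr p (fun ω => C ω = c ∧ A ω = a ∧ X ω = x ∧ Y ω = y ∧ Z ω = z) :=
        pr_congr fun ω => by tauto
      have r2 : pr p (fun ω => (A ω = a ∧ X ω = x) ∧ C ω = c)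
          = pr p (fun ω => C ω = c ∧ A ω = a ∧ X ω = x) :=
        pr_congr fun ω => by tauto
      rw [r1, r2, hCA c a x y z, div_mul_eq_mul_div]
    set q : At × XT → ℝ := fun ax => pr pc (fun ω => A ω = ax.1 ∧ X ω = ax.2) with hqdef
    have hq : IsPMF q := by
      constructor
      · intro ax; exact pr_nonneg hpc0 _
      · rw [Fintype.sum_prod_type]
        have e1 : ∀ a : At, ∑ x : XT, q (a, x) = pr pc (fun ω => A ω = a) := by
          intro a
          rw [pr_partition (fun ω => A ω = a) X]
        simp only [e1]
        rw [pr_total, sum_condp h0]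
    -- identify the two joint distributions
    have hdistY : ∀ (a : At) (y : YT),
        pr (joint q W) (fun w => w.1 = a ∧ w.2.2.1 = y) = pr pc (fun ω => A ω = a ∧ Y ω = y) := by
      intro a y
      have rhs : pr pc (fun ω => A ω = a ∧ Y ω = y)
          = ∑ x : XT, ∑ z : ZT, q (a, x) * W x (y, z) := by
        rw [pr_partition (fun ω => A ω = a ∧ Y ω = y) X]
        refine Finset.sum_congr rfl fun x _ => ?_
        rw [pr_partition _ Z]
        refine Finset.sum_congr rfl fun z _ => ?_
        have : pr pc (fun ω => (((A ω = a ∧ Y ω = y) ∧ X ω = x) ∧ Z ω = z))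
            = pr pc (fun ω => A ω = a ∧ X ω = x ∧ Y ω = y ∧ Z ω = z) :=
          pr_congr fun ω => by tauto
        rw [this, hcond a x y z]
      rw [rhs]
      rw [pr_partition (p := joint q W) (fun w => w.1 = a ∧ w.2.2.1 = y) (fun w => w.2.1)]
      refine Finset.sum_congr rfl fun x _ => ?_
      rw [pr_partition (p := joint q W) _ (fun w => w.2.2.2)]
      refine Finset.sum_congr rfl fun z _ => ?_
      have e : pr (joint q W)
          (fun w => ((w.1 = a ∧ w.2.2.1 = y) ∧ w.2.1 = x) ∧ w.2.2.2 = z)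
          = pr (joint q W) (fun w => w = (a, x, (y, z))) :=
        pr_congr fun w => by
          constructor
          · rintro ⟨⟨⟨h1, h2⟩, h3⟩, h4⟩
            exact Prod.ext h1 (Prod.ext h3 (Prod.ext h2 h4))
          · rintro rfl; exact ⟨⟨⟨rfl, rfl⟩, rfl⟩, rfl⟩
      rw [e, pr_point]
      rfl
    have hdistZ : ∀ (a : At) (z : ZT),
        pr (joint q W) (fun w => w.1 = a ∧ w.2.2.2 = z) = pr pc (fun ω => A ω = a ∧ Z ω = z) := by
      intro a z
      have rhs : pr pc (fun ω => A ω = a ∧ Z ω = z)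
          = ∑ x : XT, ∑ y : YT, q (a, x) * W x (y, z) := by
        rw [pr_partition (fun ω => A ω = a ∧ Z ω = z) X]
        refine Finset.sum_congr rfl fun x _ => ?_
        rw [pr_partition _ Y]
        refine Finset.sum_congr rfl fun y _ => ?_
        have : pr pc (fun ω => (((A ω = a ∧ Z ω = z) ∧ X ω = x) ∧ Y ω = y))
            = pr pc (fun ω => A ω = a ∧ X ω = x ∧ Y ω = y ∧ Z ω = z) :=
          pr_congr fun ω => by tauto
        rw [this, hcond a x y z]
      rw [rhs]
      rw [pr_partition (p := joint q W) (fun w => w.1 = a ∧ w.2.2.2 = z) (fun w => w.2.1)]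
      refine Finset.sum_congr rfl fun x _ => ?_
      rw [pr_partition (p := joint q W) _ (fun w => w.2.2.1)]
      refine Finset.sum_congr rfl fun y _ => ?_
      have e : pr (joint q W)
          (fun w => ((w.1 = a ∧ w.2.2.2 = z) ∧ w.2.1 = x) ∧ w.2.2.1 = y)
          = pr (joint q W) (fun w => w = (a, x, (y, z))) :=
        pr_congr fun w => by
          constructor
          · rintro ⟨⟨⟨h1, h2⟩, h3⟩, h4⟩
            exact Prod.ext h1 (Prod.ext h3 (Prod.ext h4 h2))
          · rintro rfl; exact ⟨⟨⟨rfl, rfl⟩, rfl⟩, rfl⟩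
      rw [e, pr_point]
      rfl
    calc MI pc A Z
        = MI (joint q W) (fun w => w.1) (fun w => w.2.2.2) :=
          MI_eq_of_pair_dist fun a z => (hdistZ a z).symm
      _ ≤ MI (joint q W) (fun w => w.1) (fun w => w.2.2.1) := hLN At inferInstance q hq
      _ = MI pc A Y := MI_eq_of_pair_dist hdistY

end Secrecy
namespace Secrecy

def splitAt {n : ℕ} (i : Fin n) (A : Type) : (Fin n → A) ≃ A × ({j : Fin n // j ≠ i} → A) where
  toFun f := (f i, fun j => f j.1)
  invFun q := fun j => if h : j = i then q.1 else q.2 ⟨j, h⟩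
  left_inv f := by
    funext j
    by_cases h : j = i
    · subst h; simp
    · simp [h]
  right_inv q := by
    obtain ⟨v, r⟩ := q
    refine Prod.ext ?_ ?_
    · simp
    · funext j
      simp [j.2]

theorem sum_if_const {α : Type} [Fintype α] (c : Prop) [Decidable c] (F : α → ℝ) :
    ∑ t, (if c then F t else 0) = if c then ∑ t, F t else 0 := by
  split <;> simp

theorem if_mul_pull (c : Prop) [Decidable c] (k d : ℝ) :
    (if c then k * d else 0) = k * (if c then d else 0) := by
  split <;> simp

theorem inner_split {YT ZT : Type} [Fintype YT] [Fintype ZT] {n : ℕ} (i : Fin n)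
    (φ : (Fin n → Option YT) → (Fin n → Option ZT) → Prop)
    (κ : Fin n → YT × ZT → ℝ) :
    ∃ Cst : ℝ,
      (∀ (y : YT) (z : ZT), (∑ ys : Fin n → YT, ∑ zs : Fin n → ZT,
          if φ (fun j => if i < j then some (ys j) else none)
               (fun j => if j < i then some (zs j) else none) ∧ ys i = y ∧ zs i = z
          then ∏ j, κ j (ys j, zs j) else 0)
        = κ i (y, z) * Cst)
      ∧ (∑ ys : Fin n → YT, ∑ zs : Fin n → ZT,
          if φ (fun j => if i < j then some (ys j) else none)
               (fun j => if j < i then some (zs j) else none)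
          then ∏ j, κ j (ys j, zs j) else 0)
        = (∑ b, κ i b) * Cst := by
  haveI hne : Nonempty (Fin n) := ⟨i⟩
  rcases isEmpty_or_nonempty YT with hY | hY
  · refine ⟨0, fun y _ => (IsEmpty.false y).elim, ?_⟩
    rw [mul_zero]
    exact Finset.sum_eq_zero fun ys _ => (IsEmpty.false ys).elim
  rcases isEmpty_or_nonempty ZT with hZ | hZ
  · refine ⟨0, fun _ z => (IsEmpty.false z).elim, ?_⟩
    rw [mul_zero]
    exact Finset.sum_eq_zero fun ys _ => by
      rw [Finset.univ_eq_empty (α := Fin n → ZT), Finset.sum_empty]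
  classical
  set yd : YT := Classical.arbitrary YT
  set zd : ZT := Classical.arbitrary ZT
  set rY : YT → ({j : Fin n // j ≠ i} → YT) → (Fin n → YT) :=
    fun v yr => (splitAt i YT).symm (v, yr) with hrY
  set rZ : ZT → ({j : Fin n // j ≠ i} → ZT) → (Fin n → ZT) :=
    fun w zr => (splitAt i ZT).symm (w, zr) with hrZ
  have fY1 : ∀ v yr, rY v yr i = v := by intro v yr; simp [hrY, splitAt]
  have fZ1 : ∀ w zr, rZ w zr i = w := by intro w zr; simp [hrZ, splitAt]
  have fY2 : ∀ v yr (j : Fin n) (h : j ≠ i), rY v yr j = yr ⟨j, h⟩ := by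
    intro v yr j h; simp [hrY, splitAt, h]
  have fZ2 : ∀ w zr (j : Fin n) (h : j ≠ i), rZ w zr j = zr ⟨j, h⟩ := by
    intro w zr j h; simp [hrZ, splitAt, h]
  have futconst : ∀ v v' yr,
      (fun j => if i < j then some (rY v yr j) else none)
        = (fun j => if i < j then some (rY v' yr j) else none) := by
    intro v v' yr
    funext j
    by_cases hij : i < j
    · have hji : j ≠ i := by rintro rfl; exact lt_irrefl _ hij
      rw [if_pos hij, if_pos hij, fY2 _ _ _ hji, fY2 _ _ _ hji]
    · rw [if_neg hij, if_neg hij]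
  have pstconst : ∀ w w' zr,
      (fun j => if j < i then some (rZ w zr j) else none)
        = (fun j => if j < i then some (rZ w' zr j) else none) := by
    intro w w' zr
    funext j
    by_cases hij : j < i
    · have hji : j ≠ i := by rintro rfl; exact lt_irrefl _ hij
      rw [if_pos hij, if_pos hij, fZ2 _ _ _ hji, fZ2 _ _ _ hji]
    · rw [if_neg hij, if_neg hij]
  set D : ({j : Fin n // j ≠ i} → YT) → ({j : Fin n // j ≠ i} → ZT) → ℝ :=
    fun yr zr => ∏ j ∈ Finset.univ.erase i, κ j (rY yd yr j, rZ zd zr j) with hD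
  have prodsplit : ∀ v yr w zr,
      (∏ j, κ j (rY v yr j, rZ w zr j)) = κ i (v, w) * D yr zr := by
    intro v yr w zr
    rw [← Finset.mul_prod_erase Finset.univ _ (Finset.mem_univ i), fY1, fZ1]
    congr 1
    refine Finset.prod_congr rfl fun j hj => ?_
    have hji : j ≠ i := (Finset.mem_erase.mp hj).1
    rw [fY2 _ _ _ hji, fZ2 _ _ _ hji, fY2 _ _ _ hji, fZ2 _ _ _ hji]
  set gc : ({j : Fin n // j ≠ i} → YT) → ({j : Fin n // j ≠ i} → ZT) → Prop :=
    fun yr zr => φ (fun j => if i < j then some (rY yd yr j) else none)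
      (fun j => if j < i then some (rZ zd zr j) else none) with hgc
  have gcconst : ∀ v w yr zr,
      φ (fun j => if i < j then some (rY v yr j) else none)
        (fun j => if j < i then some (rZ w zr j) else none) ↔ gc yr zr := by
    intro v w yr zr
    rw [futconst v yd yr, pstconst w zd zr]
  set Cst : ℝ := ∑ yr, ∑ zr, if gc yr zr then D yr zr else 0 with hCst
  have reY : ∀ F : (Fin n → YT) → ℝ, ∑ ys, F ys = ∑ v, ∑ yr, F (rY v yr) := by
    intro F
    rw [← Equiv.sum_comp (splitAt i YT).symm F, Fintype.sum_prod_type]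
  have reZ : ∀ F : (Fin n → ZT) → ℝ, ∑ zs, F zs = ∑ w, ∑ zr, F (rZ w zr) := by
    intro F
    rw [← Equiv.sum_comp (splitAt i ZT).symm F, Fintype.sum_prod_type]
  refine ⟨Cst, ?_, ?_⟩
  · intro y z
    rw [reY]
    have step1 : ∀ v yr, (∑ zs : Fin n → ZT,
        if φ (fun j => if i < j then some (rY v yr j) else none)
             (fun j => if j < i then some (zs j) else none) ∧ rY v yr i = y ∧ zs i = z
        then ∏ j, κ j (rY v yr j, zs j) else 0)
        = ∑ w, ∑ zr, (if gc yr zr ∧ v = y ∧ w = z then κ i (v, w) * D yr zr else 0) := by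
      intro v yr
      rw [reZ]
      refine Finset.sum_congr rfl fun w _ => Finset.sum_congr rfl fun zr _ => ?_
      rw [prodsplit, fY1, fZ1]
      exact if_congr (and_congr (gcconst v w yr zr) Iff.rfl) rfl rfl
    simp only [step1]
    have step2 : ∀ v yr w zr, (if gc yr zr ∧ v = y ∧ w = z then κ i (v, w) * D yr zr else 0)
        = if v = y then (if w = z then (if gc yr zr then κ i (y, z) * D yr zr else 0) else 0)
          else 0 := by
      intro v yr w zr
      by_cases h1 : v = y <;> by_cases h2 : w = z <;> by_cases h3 : gc yr zr <;>
        simp [h1, h2, h3]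
    simp only [step2]
    have step3 : ∀ v, (∑ yr, ∑ w, ∑ zr, if v = y then
        (if w = z then (if gc yr zr then κ i (y, z) * D yr zr else 0) else 0) else 0)
        = if v = y then (∑ yr, ∑ w, ∑ zr,
            (if w = z then (if gc yr zr then κ i (y, z) * D yr zr else 0) else 0)) else 0 := by
      intro v
      simp only [sum_if_const]
    simp only [step3]
    rw [Finset.sum_ite_eq' Finset.univ y]
    simp only [Finset.mem_univ, if_true]
    have step4 : ∀ (yr : {j : Fin n // j ≠ i} → YT), (∑ w, ∑ zr,
        if w = z then (if gc yr zr then κ i (y, z) * D yr zr else 0) else 0)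
        = ∑ zr, (if gc yr zr then κ i (y, z) * D yr zr else 0) := by
      intro yr
      have : ∀ w : ZT, (∑ zr, if w = z then (if gc yr zr then κ i (y, z) * D yr zr else 0) else 0)
          = if w = z then (∑ zr, (if gc yr zr then κ i (y, z) * D yr zr else 0)) else 0 := by
        intro w; simp only [sum_if_const]
      simp only [this]
      rw [Finset.sum_ite_eq' Finset.univ z]
      simp
    simp only [step4]
    simp only [if_mul_pull, ← Finset.mul_sum]
    rfl
  · rw [reY]
    have step1 : ∀ v yr, (∑ zs : Fin n → ZT,
        if φ (fun j => if i < j then some (rY v yr j) else none)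
             (fun j => if j < i then some (zs j) else none)
        then ∏ j, κ j (rY v yr j, zs j) else 0)
        = ∑ w, ∑ zr, (κ i (v, w) * if gc yr zr then D yr zr else 0) := by
      intro v yr
      rw [reZ]
      refine Finset.sum_congr rfl fun w _ => Finset.sum_congr rfl fun zr _ => ?_
      rw [prodsplit, ← if_mul_pull]
      exact if_congr (gcconst v w yr zr) rfl rfl
    simp only [step1]
    have step2 : ∀ v yr, (∑ w, ∑ zr, (κ i (v, w) * if gc yr zr then D yr zr else 0))
        = ∑ w, (κ i (v, w) * ∑ zr, (if gc yr zr then D yr zr else 0)) := by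
      intro v yr
      simp only [← Finset.mul_sum]
    simp only [step2]
    have step3 : ∀ v, (∑ yr, ∑ w, (κ i (v, w) * ∑ zr, (if gc yr zr then D yr zr else 0)))
        = (∑ w, κ i (v, w)) * Cst := by
      intro v
      rw [hCst, Finset.sum_mul, Finset.sum_comm]
      refine Finset.sum_congr rfl fun w _ => ?_
      rw [Finset.mul_sum]
    simp only [step3]
    rw [← Finset.sum_mul]
    congr 1
    exact (Fintype.sum_prod_type (κ i)).symm

end Secrecy
namespace Secrecy
variable {Ω : Type} [Fintype Ω]

theorem pr_comp5 {A1 A2 A3 A4 A5 : Type} [Fintype A1] [Fintype A2] [Fintype A3]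
    [Fintype A4] [Fintype A5] (p : Ω → ℝ)
    (V1 : Ω → A1) (V2 : Ω → A2) (V3 : Ω → A3) (V4 : Ω → A4) (V5 : Ω → A5)
    (sc : A1 → A2 → A3 → A4 → A5 → Prop) :
    pr p (fun ω => sc (V1 ω) (V2 ω) (V3 ω) (V4 ω) (V5 ω))
      = ∑ a1, ∑ a2, ∑ a3, ∑ a4, ∑ a5, if sc a1 a2 a3 a4 a5 then
          pr p (fun ω => V1 ω = a1 ∧ V2 ω = a2 ∧ V3 ω = a3 ∧ V4 ω = a4 ∧ V5 ω = a5)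
        else 0 := by
  rw [pr_comp (fun ω => (V1 ω, V2 ω, V3 ω, V4 ω, V5 ω))
    (fun t => sc t.1 t.2.1 t.2.2.1 t.2.2.2.1 t.2.2.2.2)]
  simp only [Fintype.sum_prod_type]
  refine Finset.sum_congr rfl fun a1 _ => Finset.sum_congr rfl fun a2 _ =>
    Finset.sum_congr rfl fun a3 _ => Finset.sum_congr rfl fun a4 _ =>
    Finset.sum_congr rfl fun a5 _ => ?_
  refine if_congr Iff.rfl ?_ rfl
  exact pr_congr fun ω => by simp [Prod.ext_iff, and_assoc]

section StarSec
variable {M0T M1T XT YT ZT : Type} [Fintype M0T] [Fintype M1T]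
    [Fintype XT] [Fintype YT] [Fintype ZT] {n : ℕ}

theorem star (p : Ω → ℝ) (M0 : Ω → M0T) (M1 : Ω → M1T)
    (Xn : Ω → Fin n → XT) (Yn : Ω → Fin n → YT) (Zn : Ω → Fin n → ZT)
    (W : XT → YT × ZT → ℝ) (hW : IsChannel W)
    (hMem : ∀ (m0 : M0T) (m1 : M1T) (xs : Fin n → XT) (ys : Fin n → YT) (zs : Fin n → ZT),
      pr p (fun ω => M0 ω = m0 ∧ M1 ω = m1 ∧ Xn ω = xs ∧ Yn ω = ys ∧ Zn ω = zs)
        = pr p (fun ω => M0 ω = m0 ∧ M1 ω = m1 ∧ Xn ω = xs) * ∏ i, W (xs i) (ys i, zs i))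
    (i : Fin n) {S : Type} [Fintype S]
    (g : M0T → M1T → (Fin n → Option YT) → (Fin n → Option ZT) → S)
    (s : S) (x : XT) (y : YT) (z : ZT) :
    pr p (fun ω => g (M0 ω) (M1 ω) (future Yn i ω) (past Zn i ω) = s ∧ Xn ω i = x
        ∧ Yn ω i = y ∧ Zn ω i = z)
      = pr p (fun ω => g (M0 ω) (M1 ω) (future Yn i ω) (past Zn i ω) = s ∧ Xn ω i = x)
        * W x (y, z) := by
  have hfut : ∀ ω, future Yn i ω = fun j => if i < j then some (Yn ω j) else none :=
    fun ω => rfl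
  have hpst : ∀ ω, past Zn i ω = fun j => if j < i then some (Zn ω j) else none :=
    fun ω => rfl
  have eL : pr p (fun ω => g (M0 ω) (M1 ω) (future Yn i ω) (past Zn i ω) = s ∧ Xn ω i = x
        ∧ Yn ω i = y ∧ Zn ω i = z)
      = pr p (fun ω => (fun m0 m1 xs ys zs =>
          g m0 m1 (fun j => if i < j then some (ys j) else none)
            (fun j => if j < i then some (zs j) else none) = s ∧ xs i = x ∧ ys i = y ∧ zs i = z)
          (M0 ω) (M1 ω) (Xn ω) (Yn ω) (Zn ω)) :=
    pr_congr fun ω => by rw [hfut ω, hpst ω]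
  have eR : pr p (fun ω => g (M0 ω) (M1 ω) (future Yn i ω) (past Zn i ω) = s ∧ Xn ω i = x)
      = pr p (fun ω => (fun m0 m1 xs ys zs =>
          g m0 m1 (fun j => if i < j then some (ys j) else none)
            (fun j => if j < i then some (zs j) else none) = s ∧ xs i = x)
          (M0 ω) (M1 ω) (Xn ω) (Yn ω) (Zn ω)) :=
    pr_congr fun ω => by rw [hfut ω, hpst ω]
  rw [eL, eR, pr_comp5 p M0 M1 Xn Yn Zn (fun m0 m1 xs ys zs =>
      g m0 m1 (fun j => if i < j then some (ys j) else none)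
        (fun j => if j < i then some (zs j) else none) = s ∧ xs i = x ∧ ys i = y ∧ zs i = z),
    pr_comp5 p M0 M1 Xn Yn Zn (fun m0 m1 xs ys zs =>
      g m0 m1 (fun j => if i < j then some (ys j) else none)
        (fun j => if j < i then some (zs j) else none) = s ∧ xs i = x)]
  simp only [hMem]
  set Q : M0T → M1T → (Fin n → XT) → ℝ :=
    fun m0 m1 xs => pr p (fun ω => M0 ω = m0 ∧ M1 ω = m1 ∧ Xn ω = xs) with hQ
  have hinner := fun (m0 : M0T) (m1 : M1T) (xs : Fin n → XT) =>
    inner_split i (fun fy pz => g m0 m1 fy pz = s) (fun j => W (xs j))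
  choose Cst h1 h2 using hinner
  have L : ∀ m0 m1 xs, (∑ ys : Fin n → YT, ∑ zs : Fin n → ZT,
      if g m0 m1 (fun j => if i < j then some (ys j) else none)
          (fun j => if j < i then some (zs j) else none) = s ∧ xs i = x ∧ ys i = y ∧ zs i = z
      then Q m0 m1 xs * ∏ j, W (xs j) (ys j, zs j) else 0)
      = if xs i = x then Q m0 m1 xs * (W x (y, z) * Cst m0 m1 xs) else 0 := by
    intro m0 m1 xs
    by_cases hx : xs i = x
    · rw [if_pos hx]
      have e : ∀ (ys : Fin n → YT) (zs : Fin n → ZT),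
          (if g m0 m1 (fun j => if i < j then some (ys j) else none)
              (fun j => if j < i then some (zs j) else none) = s
              ∧ xs i = x ∧ ys i = y ∧ zs i = z
          then Q m0 m1 xs * ∏ j, W (xs j) (ys j, zs j) else 0)
          = Q m0 m1 xs * (if g m0 m1 (fun j => if i < j then some (ys j) else none)
              (fun j => if j < i then some (zs j) else none) = s ∧ ys i = y ∧ zs i = z
            then ∏ j, W (xs j) (ys j, zs j) else 0) := by
        intro ys zs
        rw [← if_mul_pull]
        exact if_congr ⟨fun h => ⟨h.1, h.2.2.1, h.2.2.2⟩,
          fun h => ⟨h.1, hx, h.2.1, h.2.2⟩⟩ rfl rfl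
      simp only [e, ← Finset.mul_sum]
      rw [h1 m0 m1 xs y z, hx]
    · rw [if_neg hx]
      refine Finset.sum_eq_zero fun ys _ => Finset.sum_eq_zero fun zs _ =>
        if_neg fun hcond => hx hcond.2.1
  have R : ∀ m0 m1 xs, (∑ ys : Fin n → YT, ∑ zs : Fin n → ZT,
      if g m0 m1 (fun j => if i < j then some (ys j) else none)
          (fun j => if j < i then some (zs j) else none) = s ∧ xs i = x
      then Q m0 m1 xs * ∏ j, W (xs j) (ys j, zs j) else 0)
      = if xs i = x then Q m0 m1 xs * Cst m0 m1 xs else 0 := by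
    intro m0 m1 xs
    by_cases hx : xs i = x
    · rw [if_pos hx]
      have e : ∀ (ys : Fin n → YT) (zs : Fin n → ZT),
          (if g m0 m1 (fun j => if i < j then some (ys j) else none)
              (fun j => if j < i then some (zs j) else none) = s ∧ xs i = x
          then Q m0 m1 xs * ∏ j, W (xs j) (ys j, zs j) else 0)
          = Q m0 m1 xs * (if g m0 m1 (fun j => if i < j then some (ys j) else none)
              (fun j => if j < i then some (zs j) else none) = s
            then ∏ j, W (xs j) (ys j, zs j) else 0) := by
        intro ys zs
        rw [← if_mul_pull]
        exact if_congr ⟨fun h => h.1, fun h => ⟨h, hx⟩⟩ rfl rfl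
      simp only [e, ← Finset.mul_sum]
      rw [h2 m0 m1 xs, hx, hW.2 x, one_mul]
    · rw [if_neg hx]
      refine Finset.sum_eq_zero fun ys _ => Finset.sum_eq_zero fun zs _ =>
        if_neg fun hcond => hx hcond.2
  simp only [hQ] at L R
  simp only [L, R]
  rw [Finset.sum_mul]
  refine Finset.sum_congr rfl fun m0 _ => ?_
  rw [Finset.sum_mul]
  refine Finset.sum_congr rfl fun m1 _ => ?_
  rw [Finset.sum_mul]
  refine Finset.sum_congr rfl fun xs _ => ?_
  split_ifs <;> ring

end StarSec
end Secrecy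
namespace Secrecy
section Csiszar
variable {Ω Tt YT ZT : Type} [Fintype Ω] [Fintype Tt] [Fintype YT] [Fintype ZT] {n : ℕ}

theorem csiszar [Nonempty YT] [Nonempty ZT] (p : Ω → ℝ) (T : Ω → Tt)
    (Yn : Ω → Fin n → YT) (Zn : Ω → Fin n → ZT) :
    ∑ i : Fin n, CMI p (past Zn i) (fun ω => Yn ω i) (fun ω => (T ω, future Yn i ω))
      = ∑ i : Fin n, CMI p (future Yn i) (fun ω => Zn ω i) (fun ω => (T ω, past Zn i ω)) := by
  set cy : ℕ → Ω → Fin n → Option YT :=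
    fun k ω j => if k ≤ (j : ℕ) then some (Yn ω j) else none with hcy
  set cz : ℕ → Ω → Fin n → Option ZT :=
    fun k ω j => if (j : ℕ) < k then some (Zn ω j) else none with hcz
  have hpast : ∀ i : Fin n, past Zn i = fun ω => cz (i : ℕ) ω := by
    intro i; funext ω j
    simp only [past, hcz]
    by_cases h : j < i
    · rw [if_pos h, if_pos (Fin.lt_def.mp h)]
    · rw [if_neg h, if_neg (fun hc => h (Fin.lt_def.mpr hc))]
  have hfut : ∀ i : Fin n, future Yn i = fun ω => cy ((i : ℕ) + 1) ω := by
    intro i; funext ω j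
    simp only [future, hcy]
    by_cases h : i < j
    · rw [if_pos h, if_pos (show (i : ℕ) + 1 ≤ (j : ℕ) from Fin.lt_def.mp h)]
    · rw [if_neg h, if_neg (show ¬((i : ℕ) + 1 ≤ (j : ℕ)) from fun hc => h (Fin.lt_def.mpr hc))]
  simp only [hpast, hfut]
  set fy : ℕ → ℝ := fun k => H p (fun ω => (T ω, cy k ω)) with hfy
  set fz : ℕ → ℝ := fun k => H p (fun ω => (T ω, cz k ω)) with hfz
  set d : ℕ → ℝ := fun k => H p (fun ω => (T ω, cy k ω, cz k ω)) with hd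
  have dY : YT := Classical.arbitrary YT
  have dZ : ZT := Classical.arbitrary ZT
  -- the glue identities
  have A2 : ∀ i : Fin n, H p (fun ω => (Yn ω i, (T ω, cy ((i : ℕ) + 1) ω)))
      = fy (i : ℕ) := by
    intro i
    refine H_det p ⟨fun q => (q.2.1, fun j => if (j : ℕ) = (i : ℕ) then some q.1 else q.2.2 j),
      fun q => ((q.2 i).getD dY, (q.1, fun j => if (j : ℕ) = (i : ℕ) then none else q.2 j)),
      fun ω => ?_, fun ω => ?_⟩
    · refine Prod.ext rfl ?_
      dsimp only
      funext j
      simp only [hcy]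
      rcases eq_or_ne (j : ℕ) (i : ℕ) with hj | hj
      · have hji : j = i := Fin.val_injective hj
        subst hji
        simp
      · rw [if_neg hj]
        split_ifs with h1 h2 <;> first | rfl | omega
    · dsimp only
      refine Prod.ext ?_ (Prod.ext rfl ?_)
      · simp [hcy]
      · funext j
        simp only [hcy]
        rcases eq_or_ne (j : ℕ) (i : ℕ) with hj | hj
        · rw [if_pos hj, if_neg (by omega)]
        · rw [if_neg hj]
          split_ifs with h1 h2 <;> first | rfl | omega
  have A3 : ∀ i : Fin n,
      H p (fun ω => (cz (i : ℕ) ω, (Yn ω i, (T ω, cy ((i : ℕ) + 1) ω)))) = d (i : ℕ) := by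
    intro i
    refine H_det p ⟨fun q => (q.2.2.1,
        (fun j => if (j : ℕ) = (i : ℕ) then some q.2.1 else q.2.2.2 j, q.1)),
      fun q => (q.2.2, ((q.2.1 i).getD dY,
        (q.1, fun j => if (j : ℕ) = (i : ℕ) then none else q.2.1 j))),
      fun ω => ?_, fun ω => ?_⟩
    · refine Prod.ext rfl (Prod.ext ?_ rfl)
      dsimp only
      funext j
      simp only [hcy]
      rcases eq_or_ne (j : ℕ) (i : ℕ) with hj | hj
      · have hji : j = i := Fin.val_injective hj
        subst hji
        simp
      · rw [if_neg hj]
        split_ifs with h1 h2 <;> first | rfl | omega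
    · dsimp only
      refine Prod.ext rfl (Prod.ext ?_ (Prod.ext rfl ?_))
      · simp [hcy]
      · funext j
        simp only [hcy]
        rcases eq_or_ne (j : ℕ) (i : ℕ) with hj | hj
        · rw [if_pos hj, if_neg (by omega)]
        · rw [if_neg hj]
          split_ifs with h1 h2 <;> first | rfl | omega
  have B2 : ∀ i : Fin n, H p (fun ω => (Zn ω i, (T ω, cz (i : ℕ) ω)))
      = fz ((i : ℕ) + 1) := by
    intro i
    refine H_det p ⟨fun q => (q.2.1, fun j => if (j : ℕ) = (i : ℕ) then some q.1 else q.2.2 j),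
      fun q => ((q.2 i).getD dZ, (q.1, fun j => if (j : ℕ) = (i : ℕ) then none else q.2 j)),
      fun ω => ?_, fun ω => ?_⟩
    · refine Prod.ext rfl ?_
      dsimp only
      funext j
      simp only [hcz]
      rcases eq_or_ne (j : ℕ) (i : ℕ) with hj | hj
      · have hji : j = i := Fin.val_injective hj
        subst hji
        simp
      · rw [if_neg hj]
        split_ifs with h1 h2 <;> first | rfl | omega
    · dsimp only
      refine Prod.ext ?_ (Prod.ext rfl ?_)
      · simp [hcz]
      · funext j
        simp only [hcz]
        rcases eq_or_ne (j : ℕ) (i : ℕ) with hj | hj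
        · rw [if_pos hj, if_neg (by omega)]
        · rw [if_neg hj]
          split_ifs with h1 h2 <;> first | rfl | omega
  have B3 : ∀ i : Fin n,
      H p (fun ω => (cy ((i : ℕ) + 1) ω, (Zn ω i, (T ω, cz (i : ℕ) ω))))
        = d ((i : ℕ) + 1) := by
    intro i
    refine H_det p ⟨fun q => (q.2.2.1,
        (q.1, fun j => if (j : ℕ) = (i : ℕ) then some q.2.1 else q.2.2.2 j)),
      fun q => (q.2.1, ((q.2.2 i).getD dZ,
        (q.1, fun j => if (j : ℕ) = (i : ℕ) then none else q.2.2 j))),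
      fun ω => ?_, fun ω => ?_⟩
    · refine Prod.ext rfl (Prod.ext rfl ?_)
      dsimp only
      funext j
      simp only [hcz]
      rcases eq_or_ne (j : ℕ) (i : ℕ) with hj | hj
      · have hji : j = i := Fin.val_injective hj
        subst hji
        simp
      · rw [if_neg hj]
        split_ifs with h1 h2 <;> first | rfl | omega
    · dsimp only
      refine Prod.ext rfl (Prod.ext ?_ (Prod.ext rfl ?_))
      · simp [hcz]
      · funext j
        simp only [hcz]
        rcases eq_or_ne (j : ℕ) (i : ℕ) with hj | hj
        · rw [if_pos hj, if_neg (by omega)]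
        · rw [if_neg hj]
          split_ifs with h1 h2 <;> first | rfl | omega
  have A1 : ∀ i : Fin n, H p (fun ω => (cz (i : ℕ) ω, (T ω, cy ((i : ℕ) + 1) ω)))
      = H p (fun ω => (cy ((i : ℕ) + 1) ω, (T ω, cz (i : ℕ) ω))) := by
    intro i
    exact H_det p ⟨fun q => (q.2.2, (q.2.1, q.1)), fun q => (q.2.2, (q.2.1, q.1)),
      fun ω => rfl, fun ω => rfl⟩
  have term : ∀ i : Fin n,
      CMI p (fun ω => cz (i : ℕ) ω) (fun ω => Yn ω i) (fun ω => (T ω, cy ((i : ℕ) + 1) ω))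
        - CMI p (fun ω => cy ((i : ℕ) + 1) ω) (fun ω => Zn ω i)
            (fun ω => (T ω, cz (i : ℕ) ω))
      = (fy (i : ℕ) - fy ((i : ℕ) + 1)) + (fz (i : ℕ) - fz ((i : ℕ) + 1))
        + (d ((i : ℕ) + 1) - d (i : ℕ)) := by
    intro i
    unfold CMI
    have hfy1 : H p (fun ω => (T ω, cy ((i : ℕ) + 1) ω)) = fy ((i : ℕ) + 1) := rfl
    have hfz1 : H p (fun ω => (T ω, cz (i : ℕ) ω)) = fz (i : ℕ) := rfl
    rw [A1 i, A2 i, A3 i, B2 i, B3 i, hfy1, hfz1]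
    ring
  have key : ∑ i : Fin n,
      (CMI p (fun ω => cz (i : ℕ) ω) (fun ω => Yn ω i) (fun ω => (T ω, cy ((i : ℕ) + 1) ω))
        - CMI p (fun ω => cy ((i : ℕ) + 1) ω) (fun ω => Zn ω i)
            (fun ω => (T ω, cz (i : ℕ) ω))) = 0 := by
    rw [Finset.sum_congr rfl fun i _ => term i]
    rw [Finset.sum_add_distrib, Finset.sum_add_distrib]
    have e1 : ∑ i : Fin n, (fy (i : ℕ) - fy ((i : ℕ) + 1)) = fy 0 - fy n := by
      rw [Fin.sum_univ_eq_sum_range (fun k => fy k - fy (k + 1))]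
      exact Finset.sum_range_sub' fy n
    have e2 : ∑ i : Fin n, (fz (i : ℕ) - fz ((i : ℕ) + 1)) = fz 0 - fz n := by
      rw [Fin.sum_univ_eq_sum_range (fun k => fz k - fz (k + 1))]
      exact Finset.sum_range_sub' fz n
    have e3 : ∑ i : Fin n, (d ((i : ℕ) + 1) - d (i : ℕ)) = d n - d 0 := by
      rw [Fin.sum_univ_eq_sum_range (fun k => d (k + 1) - d k)]
      exact Finset.sum_range_sub d n
    rw [e1, e2, e3]
    have bd0 : d 0 = fy 0 := by
      refine H_det p ⟨fun q => (q.1, q.2.1), fun q => (q.1, (q.2, fun _ => none)),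
        fun ω => rfl, fun ω => ?_⟩
      refine Prod.ext rfl (Prod.ext rfl ?_)
      funext j
      simp [hcz]
    have bdn : d n = fz n := by
      refine H_det p ⟨fun q => (q.1, q.2.2), fun q => (q.1, (fun _ => none, q.2)),
        fun ω => rfl, fun ω => ?_⟩
      refine Prod.ext rfl (Prod.ext ?_ rfl)
      funext j
      simp only [hcy]
      rw [if_neg (by omega)]
    have bfyn : fy n = fz 0 := by
      refine H_det p ⟨fun q => (q.1, fun _ => none), fun q => (q.1, fun _ => none),
        fun ω => ?_, fun ω => ?_⟩
      · refine Prod.ext rfl ?_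
        funext j
        simp [hcz]
      · refine Prod.ext rfl ?_
        funext j
        simp only [hcy]
        rw [if_neg (by omega)]
    linarith
  rw [Finset.sum_sub_distrib] at key
  linarith

end Csiszar
end Secrecy
namespace Secrecy
section StarSec2
variable {Ω M0T M1T XT YT ZT : Type} [Fintype Ω] [Fintype M0T] [Fintype M1T]
    [Fintype XT] [Fintype YT] [Fintype ZT] {n : ℕ}

theorem starY (p : Ω → ℝ) (M0 : Ω → M0T) (M1 : Ω → M1T)
    (Xn : Ω → Fin n → XT) (Yn : Ω → Fin n → YT) (Zn : Ω → Fin n → ZT)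
    (W : XT → YT × ZT → ℝ) (hW : IsChannel W)
    (hMem : ∀ (m0 : M0T) (m1 : M1T) (xs : Fin n → XT) (ys : Fin n → YT) (zs : Fin n → ZT),
      pr p (fun ω => M0 ω = m0 ∧ M1 ω = m1 ∧ Xn ω = xs ∧ Yn ω = ys ∧ Zn ω = zs)
        = pr p (fun ω => M0 ω = m0 ∧ M1 ω = m1 ∧ Xn ω = xs) * ∏ i, W (xs i) (ys i, zs i))
    (i : Fin n) {S : Type} [Fintype S]
    (g : M0T → M1T → (Fin n → Option YT) → (Fin n → Option ZT) → S)
    (s : S) (x : XT) (y : YT) :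
    pr p (fun ω => g (M0 ω) (M1 ω) (future Yn i ω) (past Zn i ω) = s ∧ Xn ω i = x
        ∧ Yn ω i = y)
      = pr p (fun ω => g (M0 ω) (M1 ω) (future Yn i ω) (past Zn i ω) = s ∧ Xn ω i = x)
        * ∑ z, W x (y, z) := by
  rw [pr_partition _ (fun ω => Zn ω i), Finset.mul_sum]
  refine Finset.sum_congr rfl fun z _ => ?_
  have e : pr p (fun ω => (g (M0 ω) (M1 ω) (future Yn i ω) (past Zn i ω) = s ∧ Xn ω i = x
        ∧ Yn ω i = y) ∧ Zn ω i = z)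
      = pr p (fun ω => g (M0 ω) (M1 ω) (future Yn i ω) (past Zn i ω) = s ∧ Xn ω i = x
        ∧ Yn ω i = y ∧ Zn ω i = z) := pr_congr fun ω => by tauto
  rw [e, star p M0 M1 Xn Yn Zn W hW hMem i g s x y z]

theorem starZ (p : Ω → ℝ) (M0 : Ω → M0T) (M1 : Ω → M1T)
    (Xn : Ω → Fin n → XT) (Yn : Ω → Fin n → YT) (Zn : Ω → Fin n → ZT)
    (W : XT → YT × ZT → ℝ) (hW : IsChannel W)
    (hMem : ∀ (m0 : M0T) (m1 : M1T) (xs : Fin n → XT) (ys : Fin n → YT) (zs : Fin n → ZT),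
      pr p (fun ω => M0 ω = m0 ∧ M1 ω = m1 ∧ Xn ω = xs ∧ Yn ω = ys ∧ Zn ω = zs)
        = pr p (fun ω => M0 ω = m0 ∧ M1 ω = m1 ∧ Xn ω = xs) * ∏ i, W (xs i) (ys i, zs i))
    (i : Fin n) {S : Type} [Fintype S]
    (g : M0T → M1T → (Fin n → Option YT) → (Fin n → Option ZT) → S)
    (s : S) (x : XT) (z : ZT) :
    pr p (fun ω => g (M0 ω) (M1 ω) (future Yn i ω) (past Zn i ω) = s ∧ Xn ω i = x
        ∧ Zn ω i = z)
      = pr p (fun ω => g (M0 ω) (M1 ω) (future Yn i ω) (past Zn i ω) = s ∧ Xn ω i = x)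
        * ∑ y, W x (y, z) := by
  rw [pr_partition _ (fun ω => Yn ω i), Finset.mul_sum]
  refine Finset.sum_congr rfl fun y _ => ?_
  have e : pr p (fun ω => (g (M0 ω) (M1 ω) (future Yn i ω) (past Zn i ω) = s ∧ Xn ω i = x
        ∧ Zn ω i = z) ∧ Yn ω i = y)
      = pr p (fun ω => g (M0 ω) (M1 ω) (future Yn i ω) (past Zn i ω) = s ∧ Xn ω i = x
        ∧ Yn ω i = y ∧ Zn ω i = z) := pr_congr fun ω => by tauto
  rw [e, star p M0 M1 Xn Yn Zn W hW hMem i g s x y z]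

end StarSec2
end Secrecy

open Secrecy in
/-- for `n` uses of a memoryless channel `W(y,z|x)` with `Y` less noisy
than `Z`, and `U_i = (M₀, Z^{i-1})`,
`∑ᵢ [I(M₁;Yᵢ|M₀,Y_{i+1}ⁿ) - I(M₁;Zᵢ|M₀,Z^{i-1})] ≤ ∑ᵢ [I(Xᵢ;Yᵢ|Uᵢ) - I(Xᵢ;Zᵢ|Uᵢ)]`. -/
theorem stmt10 {Ω M0T M1T XT YT ZT : Type} [Fintype Ω] [Fintype M0T] [Fintype M1T]
    [Fintype XT] [Fintype YT] [Fintype ZT] {n : ℕ}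
    (p : Ω → ℝ) (hp : IsPMF p)
    (M0 : Ω → M0T) (M1 : Ω → M1T)
    (Xn : Ω → Fin n → XT) (Yn : Ω → Fin n → YT) (Zn : Ω → Fin n → ZT)
    (W : XT → YT × ZT → ℝ) (hW : IsChannel W)
    (hMem : ∀ (m0 : M0T) (m1 : M1T) (xs : Fin n → XT) (ys : Fin n → YT) (zs : Fin n → ZT),
      pr p (fun ω => M0 ω = m0 ∧ M1 ω = m1 ∧ Xn ω = xs ∧ Yn ω = ys ∧ Zn ω = zs)
        = pr p (fun ω => M0 ω = m0 ∧ M1 ω = m1 ∧ Xn ω = xs) * ∏ i, W (xs i) (ys i, zs i))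
    (hLN : LessNoisy W) :
    ∑ i : Fin n,
        (CMI p M1 (fun ω => Yn ω i) (fun ω => (M0 ω, future Yn i ω))
          - CMI p M1 (fun ω => Zn ω i) (fun ω => (M0 ω, past Zn i ω)))
      ≤ ∑ i : Fin n,
        (CMI p (fun ω => Xn ω i) (fun ω => Yn ω i) (fun ω => (M0 ω, past Zn i ω))
          - CMI p (fun ω => Xn ω i) (fun ω => Zn ω i) (fun ω => (M0 ω, past Zn i ω))) := by
  classical
  rcases Nat.eq_zero_or_pos n with hn0 | hn
  · subst hn0; simp
  have i0 : Fin n := ⟨0, hn⟩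
  have hne : Nonempty Ω := by
    by_contra h
    rw [not_nonempty_iff] at h
    have h2 := hp.2
    rw [Finset.univ_eq_empty, Finset.sum_empty] at h2
    exact one_ne_zero h2.symm
  obtain ⟨ω0⟩ := hne
  haveI : Nonempty YT := ⟨Yn ω0 i0⟩
  haveI : Nonempty ZT := ⟨Zn ω0 i0⟩
  -- Csiszar sum identities
  have csz1 : ∑ i : Fin n, CMI p (past Zn i) (fun ω => Yn ω i) (fun ω => (M0 ω, future Yn i ω)) = ∑ i : Fin n, CMI p (future Yn i) (fun ω => Zn ω i) (fun ω => (M0 ω, past Zn i ω)) :=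
    csiszar p M0 Yn Zn
  have csz2 : ∑ i : Fin n, CMI p (past Zn i) (fun ω => Yn ω i) (fun ω => ((M0 ω, M1 ω), future Yn i ω)) = ∑ i : Fin n, CMI p (future Yn i) (fun ω => Zn ω i) (fun ω => ((M0 ω, M1 ω), past Zn i ω)) :=
    csiszar p (fun ω => (M0 ω, M1 ω)) Yn Zn
  -- chain rule identities
  have I1 : ∀ i : Fin n, CMI p M1 (fun ω => Yn ω i) (fun ω => (M0 ω, future Yn i ω))
      = CMI p (past Zn i) (fun ω => Yn ω i) (fun ω => (M0 ω, future Yn i ω)) + CMI p M1 (fun ω => Yn ω i) (fun ω => (M0 ω, future Yn i ω, past Zn i ω)) - CMI p (past Zn i) (fun ω => Yn ω i) (fun ω => ((M0 ω, M1 ω), future Yn i ω)) := by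
    intro i
    have ch1 : CMI p (fun ω => (M1 ω, past Zn i ω)) (fun ω => Yn ω i) (fun ω => (M0 ω, future Yn i ω))
        = CMI p M1 (fun ω => Yn ω i) (fun ω => (M0 ω, future Yn i ω)) + CMI p (past Zn i) (fun ω => Yn ω i) (fun ω => ((M0 ω, future Yn i ω), M1 ω)) :=
      CMI_chain p M1 (past Zn i) (fun ω => Yn ω i) (fun ω => (M0 ω, future Yn i ω))
    have ch2 : CMI p (fun ω => (past Zn i ω, M1 ω)) (fun ω => Yn ω i) (fun ω => (M0 ω, future Yn i ω))
        = CMI p (past Zn i) (fun ω => Yn ω i) (fun ω => (M0 ω, future Yn i ω)) + CMI p M1 (fun ω => Yn ω i) (fun ω => ((M0 ω, future Yn i ω), past Zn i ω)) :=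
      CMI_chain p (past Zn i) M1 (fun ω => Yn ω i) (fun ω => (M0 ω, future Yn i ω))
    have sw : CMI p (fun ω => (M1 ω, past Zn i ω)) (fun ω => Yn ω i) (fun ω => (M0 ω, future Yn i ω))
        = CMI p (fun ω => (past Zn i ω, M1 ω)) (fun ω => Yn ω i) (fun ω => (M0 ω, future Yn i ω)) :=
      CMI_congr p ⟨fun q => (q.2, q.1), fun q => (q.2, q.1), fun _ => rfl, fun _ => rfl⟩ (Det.refl _) (Det.refl _)
    have c1 : CMI p M1 (fun ω => Yn ω i) (fun ω => ((M0 ω, future Yn i ω), past Zn i ω)) = CMI p M1 (fun ω => Yn ω i) (fun ω => (M0 ω, future Yn i ω, past Zn i ω)) :=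
      CMI_congr p (Det.refl _) (Det.refl _) ⟨fun q => (q.1.1, q.1.2, q.2), fun q => ((q.1, q.2.1), q.2.2), fun _ => rfl, fun _ => rfl⟩
    have c2 : CMI p (past Zn i) (fun ω => Yn ω i) (fun ω => ((M0 ω, future Yn i ω), M1 ω)) = CMI p (past Zn i) (fun ω => Yn ω i) (fun ω => ((M0 ω, M1 ω), future Yn i ω)) :=
      CMI_congr p (Det.refl _) (Det.refl _) ⟨fun q => ((q.1.1, q.2), q.1.2), fun q => ((q.1.1, q.2), q.1.2), fun _ => rfl, fun _ => rfl⟩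
    linarith
  have I2 : ∀ i : Fin n, CMI p M1 (fun ω => Zn ω i) (fun ω => (M0 ω, past Zn i ω))
      = CMI p (future Yn i) (fun ω => Zn ω i) (fun ω => (M0 ω, past Zn i ω)) + CMI p M1 (fun ω => Zn ω i) (fun ω => (M0 ω, future Yn i ω, past Zn i ω)) - CMI p (future Yn i) (fun ω => Zn ω i) (fun ω => ((M0 ω, M1 ω), past Zn i ω)) := by
    intro i
    have ch1 : CMI p (fun ω => (M1 ω, future Yn i ω)) (fun ω => Zn ω i) (fun ω => (M0 ω, past Zn i ω))
        = CMI p M1 (fun ω => Zn ω i) (fun ω => (M0 ω, past Zn i ω)) + CMI p (future Yn i) (fun ω => Zn ω i) (fun ω => ((M0 ω, past Zn i ω), M1 ω)) :=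
      CMI_chain p M1 (future Yn i) (fun ω => Zn ω i) (fun ω => (M0 ω, past Zn i ω))
    have ch2 : CMI p (fun ω => (future Yn i ω, M1 ω)) (fun ω => Zn ω i) (fun ω => (M0 ω, past Zn i ω))
        = CMI p (future Yn i) (fun ω => Zn ω i) (fun ω => (M0 ω, past Zn i ω)) + CMI p M1 (fun ω => Zn ω i) (fun ω => ((M0 ω, past Zn i ω), future Yn i ω)) :=
      CMI_chain p (future Yn i) M1 (fun ω => Zn ω i) (fun ω => (M0 ω, past Zn i ω))
    have sw : CMI p (fun ω => (M1 ω, future Yn i ω)) (fun ω => Zn ω i) (fun ω => (M0 ω, past Zn i ω))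
        = CMI p (fun ω => (future Yn i ω, M1 ω)) (fun ω => Zn ω i) (fun ω => (M0 ω, past Zn i ω)) :=
      CMI_congr p ⟨fun q => (q.2, q.1), fun q => (q.2, q.1), fun _ => rfl, fun _ => rfl⟩ (Det.refl _) (Det.refl _)
    have c3 : CMI p M1 (fun ω => Zn ω i) (fun ω => ((M0 ω, past Zn i ω), future Yn i ω)) = CMI p M1 (fun ω => Zn ω i) (fun ω => (M0 ω, future Yn i ω, past Zn i ω)) :=
      CMI_congr p (Det.refl _) (Det.refl _) ⟨fun q => (q.1.1, q.2, q.1.2), fun q => ((q.1, q.2.2), q.2.1), fun _ => rfl, fun _ => rfl⟩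
    have c4 : CMI p (future Yn i) (fun ω => Zn ω i) (fun ω => ((M0 ω, past Zn i ω), M1 ω)) = CMI p (future Yn i) (fun ω => Zn ω i) (fun ω => ((M0 ω, M1 ω), past Zn i ω)) :=
      CMI_congr p (Det.refl _) (Det.refl _) ⟨fun q => ((q.1.1, q.2), q.1.2), fun q => ((q.1.1, q.2), q.1.2), fun _ => rfl, fun _ => rfl⟩
    linarith
  have step1 : ∀ i ∈ Finset.univ (α := Fin n), CMI p M1 (fun ω => Yn ω i) (fun ω => (M0 ω, future Yn i ω)) - CMI p M1 (fun ω => Zn ω i) (fun ω => (M0 ω, past Zn i ω))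
      = (CMI p M1 (fun ω => Yn ω i) (fun ω => (M0 ω, future Yn i ω, past Zn i ω)) - CMI p M1 (fun ω => Zn ω i) (fun ω => (M0 ω, future Yn i ω, past Zn i ω)))
        + ((CMI p (past Zn i) (fun ω => Yn ω i) (fun ω => (M0 ω, future Yn i ω)) - CMI p (future Yn i) (fun ω => Zn ω i) (fun ω => (M0 ω, past Zn i ω))) - (CMI p (past Zn i) (fun ω => Yn ω i) (fun ω => ((M0 ω, M1 ω), future Yn i ω)) - CMI p (future Yn i) (fun ω => Zn ω i) (fun ω => ((M0 ω, M1 ω), past Zn i ω)))) := by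
    intro i _
    linarith [I1 i, I2 i]
  have reduce : ∑ i : Fin n, (CMI p M1 (fun ω => Yn ω i) (fun ω => (M0 ω, future Yn i ω)) - CMI p M1 (fun ω => Zn ω i) (fun ω => (M0 ω, past Zn i ω)))
      = ∑ i : Fin n, (CMI p M1 (fun ω => Yn ω i) (fun ω => (M0 ω, future Yn i ω, past Zn i ω)) - CMI p M1 (fun ω => Zn ω i) (fun ω => (M0 ω, future Yn i ω, past Zn i ω))) := by
    rw [Finset.sum_congr rfl step1, Finset.sum_add_distrib]
    have h2 : ∑ i : Fin n, ((CMI p (past Zn i) (fun ω => Yn ω i) (fun ω => (M0 ω, future Yn i ω)) - CMI p (future Yn i) (fun ω => Zn ω i) (fun ω => (M0 ω, past Zn i ω)))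
        - (CMI p (past Zn i) (fun ω => Yn ω i) (fun ω => ((M0 ω, M1 ω), future Yn i ω)) - CMI p (future Yn i) (fun ω => Zn ω i) (fun ω => ((M0 ω, M1 ω), past Zn i ω)))) = 0 := by
      simp only [Finset.sum_sub_distrib]
      linarith [csz1, csz2]
    rw [h2, add_zero]
  have main2 : ∀ i ∈ Finset.univ (α := Fin n),
      CMI p M1 (fun ω => Yn ω i) (fun ω => (M0 ω, future Yn i ω, past Zn i ω)) - CMI p M1 (fun ω => Zn ω i) (fun ω => (M0 ω, future Yn i ω, past Zn i ω)) ≤ CMI p (fun ω => Xn ω i) (fun ω => Yn ω i) (fun ω => (M0 ω, past Zn i ω)) - CMI p (fun ω => Xn ω i) (fun ω => Zn ω i) (fun ω => (M0 ω, past Zn i ω)) := by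
    intro i _
    -- chain rules over V with (M1, X_i)
    have ch1 : CMI p (fun ω => (M1 ω, Xn ω i)) (fun ω => Yn ω i) (fun ω => (M0 ω, future Yn i ω, past Zn i ω))
        = CMI p M1 (fun ω => Yn ω i) (fun ω => (M0 ω, future Yn i ω, past Zn i ω)) + CMI p (fun ω => Xn ω i) (fun ω => Yn ω i) (fun ω => ((M0 ω, future Yn i ω, past Zn i ω), M1 ω)) :=
      CMI_chain p M1 (fun ω => Xn ω i) (fun ω => Yn ω i) (fun ω => (M0 ω, future Yn i ω, past Zn i ω))
    have ch2 : CMI p (fun ω => (Xn ω i, M1 ω)) (fun ω => Yn ω i) (fun ω => (M0 ω, future Yn i ω, past Zn i ω))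
        = CMI p (fun ω => Xn ω i) (fun ω => Yn ω i) (fun ω => (M0 ω, future Yn i ω, past Zn i ω)) + CMI p M1 (fun ω => Yn ω i) (fun ω => ((M0 ω, future Yn i ω, past Zn i ω), Xn ω i)) :=
      CMI_chain p (fun ω => Xn ω i) M1 (fun ω => Yn ω i) (fun ω => (M0 ω, future Yn i ω, past Zn i ω))
    have sw1 : CMI p (fun ω => (M1 ω, Xn ω i)) (fun ω => Yn ω i) (fun ω => (M0 ω, future Yn i ω, past Zn i ω))
        = CMI p (fun ω => (Xn ω i, M1 ω)) (fun ω => Yn ω i) (fun ω => (M0 ω, future Yn i ω, past Zn i ω)) :=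
      CMI_congr p ⟨fun q => (q.2, q.1), fun q => (q.2, q.1), fun _ => rfl, fun _ => rfl⟩ (Det.refl _) (Det.refl _)
    have ch3 : CMI p (fun ω => (M1 ω, Xn ω i)) (fun ω => Zn ω i) (fun ω => (M0 ω, future Yn i ω, past Zn i ω))
        = CMI p M1 (fun ω => Zn ω i) (fun ω => (M0 ω, future Yn i ω, past Zn i ω)) + CMI p (fun ω => Xn ω i) (fun ω => Zn ω i) (fun ω => ((M0 ω, future Yn i ω, past Zn i ω), M1 ω)) :=
      CMI_chain p M1 (fun ω => Xn ω i) (fun ω => Zn ω i) (fun ω => (M0 ω, future Yn i ω, past Zn i ω))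
    have ch4 : CMI p (fun ω => (Xn ω i, M1 ω)) (fun ω => Zn ω i) (fun ω => (M0 ω, future Yn i ω, past Zn i ω))
        = CMI p (fun ω => Xn ω i) (fun ω => Zn ω i) (fun ω => (M0 ω, future Yn i ω, past Zn i ω)) + CMI p M1 (fun ω => Zn ω i) (fun ω => ((M0 ω, future Yn i ω, past Zn i ω), Xn ω i)) :=
      CMI_chain p (fun ω => Xn ω i) M1 (fun ω => Zn ω i) (fun ω => (M0 ω, future Yn i ω, past Zn i ω))
    have sw2 : CMI p (fun ω => (M1 ω, Xn ω i)) (fun ω => Zn ω i) (fun ω => (M0 ω, future Yn i ω, past Zn i ω))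
        = CMI p (fun ω => (Xn ω i, M1 ω)) (fun ω => Zn ω i) (fun ω => (M0 ω, future Yn i ω, past Zn i ω)) :=
      CMI_congr p ⟨fun q => (q.2, q.1), fun q => (q.2, q.1), fun _ => rfl, fun _ => rfl⟩ (Det.refl _) (Det.refl _)
    -- chain rules over U with (F, X_i)
    have ch5 : CMI p (fun ω => (future Yn i ω, Xn ω i)) (fun ω => Yn ω i) (fun ω => (M0 ω, past Zn i ω))
        = CMI p (future Yn i) (fun ω => Yn ω i) (fun ω => (M0 ω, past Zn i ω)) + CMI p (fun ω => Xn ω i) (fun ω => Yn ω i) (fun ω => ((M0 ω, past Zn i ω), future Yn i ω)) :=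
      CMI_chain p (future Yn i) (fun ω => Xn ω i) (fun ω => Yn ω i) (fun ω => (M0 ω, past Zn i ω))
    have ch6 : CMI p (fun ω => (Xn ω i, future Yn i ω)) (fun ω => Yn ω i) (fun ω => (M0 ω, past Zn i ω))
        = CMI p (fun ω => Xn ω i) (fun ω => Yn ω i) (fun ω => (M0 ω, past Zn i ω)) + CMI p (future Yn i) (fun ω => Yn ω i) (fun ω => ((M0 ω, past Zn i ω), Xn ω i)) :=
      CMI_chain p (fun ω => Xn ω i) (future Yn i) (fun ω => Yn ω i) (fun ω => (M0 ω, past Zn i ω))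
    have sw3 : CMI p (fun ω => (future Yn i ω, Xn ω i)) (fun ω => Yn ω i) (fun ω => (M0 ω, past Zn i ω))
        = CMI p (fun ω => (Xn ω i, future Yn i ω)) (fun ω => Yn ω i) (fun ω => (M0 ω, past Zn i ω)) :=
      CMI_congr p ⟨fun q => (q.2, q.1), fun q => (q.2, q.1), fun _ => rfl, fun _ => rfl⟩ (Det.refl _) (Det.refl _)
    have ch7 : CMI p (fun ω => (future Yn i ω, Xn ω i)) (fun ω => Zn ω i) (fun ω => (M0 ω, past Zn i ω))
        = CMI p (future Yn i) (fun ω => Zn ω i) (fun ω => (M0 ω, past Zn i ω)) + CMI p (fun ω => Xn ω i) (fun ω => Zn ω i) (fun ω => ((M0 ω, past Zn i ω), future Yn i ω)) :=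
      CMI_chain p (future Yn i) (fun ω => Xn ω i) (fun ω => Zn ω i) (fun ω => (M0 ω, past Zn i ω))
    have ch8 : CMI p (fun ω => (Xn ω i, future Yn i ω)) (fun ω => Zn ω i) (fun ω => (M0 ω, past Zn i ω))
        = CMI p (fun ω => Xn ω i) (fun ω => Zn ω i) (fun ω => (M0 ω, past Zn i ω)) + CMI p (future Yn i) (fun ω => Zn ω i) (fun ω => ((M0 ω, past Zn i ω), Xn ω i)) :=
      CMI_chain p (fun ω => Xn ω i) (future Yn i) (fun ω => Zn ω i) (fun ω => (M0 ω, past Zn i ω))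
    have sw4 : CMI p (fun ω => (future Yn i ω, Xn ω i)) (fun ω => Zn ω i) (fun ω => (M0 ω, past Zn i ω))
        = CMI p (fun ω => (Xn ω i, future Yn i ω)) (fun ω => Zn ω i) (fun ω => (M0 ω, past Zn i ω)) :=
      CMI_congr p ⟨fun q => (q.2, q.1), fun q => (q.2, q.1), fun _ => rfl, fun _ => rfl⟩ (Det.refl _) (Det.refl _)
    have c5 : CMI p (fun ω => Xn ω i) (fun ω => Yn ω i) (fun ω => ((M0 ω, past Zn i ω), future Yn i ω)) = CMI p (fun ω => Xn ω i) (fun ω => Yn ω i) (fun ω => (M0 ω, future Yn i ω, past Zn i ω)) :=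
      CMI_congr p (Det.refl _) (Det.refl _) ⟨fun q => (q.1.1, q.2, q.1.2), fun q => ((q.1, q.2.2), q.2.1), fun _ => rfl, fun _ => rfl⟩
    have c6 : CMI p (fun ω => Xn ω i) (fun ω => Zn ω i) (fun ω => ((M0 ω, past Zn i ω), future Yn i ω)) = CMI p (fun ω => Xn ω i) (fun ω => Zn ω i) (fun ω => (M0 ω, future Yn i ω, past Zn i ω)) :=
      CMI_congr p (Det.refl _) (Det.refl _) ⟨fun q => (q.1.1, q.2, q.1.2), fun q => ((q.1, q.2.2), q.2.1), fun _ => rfl, fun _ => rfl⟩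
    -- vanishing terms
    have Z1 : CMI p M1 (fun ω => Yn ω i) (fun ω => ((M0 ω, future Yn i ω, past Zn i ω), Xn ω i)) = 0 := by
      refine CMI_zero_of_indep hp M1 (fun ω => Yn ω i) (fun ω => ((M0 ω, future Yn i ω, past Zn i ω), Xn ω i)) ?_
      intro a b c
      obtain ⟨v, x⟩ := c
      have e1 : pr p (fun ω => M1 ω = a ∧ Yn ω i = b
            ∧ ((M0 ω, future Yn i ω, past Zn i ω), Xn ω i) = (v, x))
          = pr p (fun ω => ((M0 ω, future Yn i ω, past Zn i ω), M1 ω) = (v, a)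
            ∧ Xn ω i = x ∧ Yn ω i = b) :=
        pr_congr fun ω => by simp only [Prod.mk.injEq]; tauto
      have e2 : pr p (fun ω => M1 ω = a
            ∧ ((M0 ω, future Yn i ω, past Zn i ω), Xn ω i) = (v, x))
          = pr p (fun ω => ((M0 ω, future Yn i ω, past Zn i ω), M1 ω) = (v, a)
            ∧ Xn ω i = x) :=
        pr_congr fun ω => by simp only [Prod.mk.injEq]; tauto
      have e3 : pr p (fun ω => ((M0 ω, future Yn i ω, past Zn i ω), Xn ω i) = (v, x))
          = ∑ a' : M1T, pr p (fun ω => ((M0 ω, future Yn i ω, past Zn i ω), M1 ω) = (v, a')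
            ∧ Xn ω i = x) := by
        rw [pr_partition _ M1]
        exact Finset.sum_congr rfl fun a' _ =>
          pr_congr fun ω => by simp only [Prod.mk.injEq]; tauto
      have e4 : pr p (fun ω => Yn ω i = b
            ∧ ((M0 ω, future Yn i ω, past Zn i ω), Xn ω i) = (v, x))
          = (∑ a' : M1T, pr p (fun ω => ((M0 ω, future Yn i ω, past Zn i ω), M1 ω) = (v, a')
              ∧ Xn ω i = x)) * ∑ z, W x (b, z) := by
        rw [pr_partition _ M1, Finset.sum_mul]
        refine Finset.sum_congr rfl fun a' _ => ?_
        have e5 : pr p (fun ω => (Yn ω i = b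
              ∧ ((M0 ω, future Yn i ω, past Zn i ω), Xn ω i) = (v, x)) ∧ M1 ω = a')
            = pr p (fun ω => ((M0 ω, future Yn i ω, past Zn i ω), M1 ω) = (v, a')
              ∧ Xn ω i = x ∧ Yn ω i = b) :=
          pr_congr fun ω => by simp only [Prod.mk.injEq]; tauto
        rw [e5, starY p M0 M1 Xn Yn Zn W hW hMem i (fun m0 m1 f pz => ((m0, f, pz), m1)) (v, a') x b]
      rw [e1, e2, e3, e4, starY p M0 M1 Xn Yn Zn W hW hMem i (fun m0 m1 f pz => ((m0, f, pz), m1)) (v, a) x b]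
      ring
    have Z2 : CMI p M1 (fun ω => Zn ω i) (fun ω => ((M0 ω, future Yn i ω, past Zn i ω), Xn ω i)) = 0 := by
      refine CMI_zero_of_indep hp M1 (fun ω => Zn ω i) (fun ω => ((M0 ω, future Yn i ω, past Zn i ω), Xn ω i)) ?_
      intro a b c
      obtain ⟨v, x⟩ := c
      have e1 : pr p (fun ω => M1 ω = a ∧ Zn ω i = b
            ∧ ((M0 ω, future Yn i ω, past Zn i ω), Xn ω i) = (v, x))
          = pr p (fun ω => ((M0 ω, future Yn i ω, past Zn i ω), M1 ω) = (v, a)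
            ∧ Xn ω i = x ∧ Zn ω i = b) :=
        pr_congr fun ω => by simp only [Prod.mk.injEq]; tauto
      have e2 : pr p (fun ω => M1 ω = a
            ∧ ((M0 ω, future Yn i ω, past Zn i ω), Xn ω i) = (v, x))
          = pr p (fun ω => ((M0 ω, future Yn i ω, past Zn i ω), M1 ω) = (v, a)
            ∧ Xn ω i = x) :=
        pr_congr fun ω => by simp only [Prod.mk.injEq]; tauto
      have e3 : pr p (fun ω => ((M0 ω, future Yn i ω, past Zn i ω), Xn ω i) = (v, x))
          = ∑ a' : M1T, pr p (fun ω => ((M0 ω, future Yn i ω, past Zn i ω), M1 ω) = (v, a')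
            ∧ Xn ω i = x) := by
        rw [pr_partition _ M1]
        exact Finset.sum_congr rfl fun a' _ =>
          pr_congr fun ω => by simp only [Prod.mk.injEq]; tauto
      have e4 : pr p (fun ω => Zn ω i = b
            ∧ ((M0 ω, future Yn i ω, past Zn i ω), Xn ω i) = (v, x))
          = (∑ a' : M1T, pr p (fun ω => ((M0 ω, future Yn i ω, past Zn i ω), M1 ω) = (v, a')
              ∧ Xn ω i = x)) * ∑ y, W x (y, b) := by
        rw [pr_partition _ M1, Finset.sum_mul]
        refine Finset.sum_congr rfl fun a' _ => ?_
        have e5 : pr p (fun ω => (Zn ω i = b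
              ∧ ((M0 ω, future Yn i ω, past Zn i ω), Xn ω i) = (v, x)) ∧ M1 ω = a')
            = pr p (fun ω => ((M0 ω, future Yn i ω, past Zn i ω), M1 ω) = (v, a')
              ∧ Xn ω i = x ∧ Zn ω i = b) :=
          pr_congr fun ω => by simp only [Prod.mk.injEq]; tauto
        rw [e5, starZ p M0 M1 Xn Yn Zn W hW hMem i (fun m0 m1 f pz => ((m0, f, pz), m1)) (v, a') x b]
      rw [e1, e2, e3, e4, starZ p M0 M1 Xn Yn Zn W hW hMem i (fun m0 m1 f pz => ((m0, f, pz), m1)) (v, a) x b]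
      ring
    have Z3 : CMI p (future Yn i) (fun ω => Yn ω i) (fun ω => ((M0 ω, past Zn i ω), Xn ω i)) = 0 := by
      refine CMI_zero_of_indep hp (future Yn i) (fun ω => Yn ω i) (fun ω => ((M0 ω, past Zn i ω), Xn ω i)) ?_
      intro a b c
      obtain ⟨u, x⟩ := c
      have e1 : pr p (fun ω => future Yn i ω = a ∧ Yn ω i = b
            ∧ ((M0 ω, past Zn i ω), Xn ω i) = (u, x))
          = pr p (fun ω => ((M0 ω, past Zn i ω), future Yn i ω) = (u, a)
            ∧ Xn ω i = x ∧ Yn ω i = b) :=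
        pr_congr fun ω => by simp only [Prod.mk.injEq]; tauto
      have e2 : pr p (fun ω => future Yn i ω = a
            ∧ ((M0 ω, past Zn i ω), Xn ω i) = (u, x))
          = pr p (fun ω => ((M0 ω, past Zn i ω), future Yn i ω) = (u, a)
            ∧ Xn ω i = x) :=
        pr_congr fun ω => by simp only [Prod.mk.injEq]; tauto
      have e3 : pr p (fun ω => ((M0 ω, past Zn i ω), Xn ω i) = (u, x))
          = ∑ f' : Fin n → Option YT, pr p (fun ω => ((M0 ω, past Zn i ω), future Yn i ω)
            = (u, f') ∧ Xn ω i = x) := by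
        rw [pr_partition _ (future Yn i)]
        exact Finset.sum_congr rfl fun f' _ =>
          pr_congr fun ω => by simp only [Prod.mk.injEq]; tauto
      have e4 : pr p (fun ω => Yn ω i = b
            ∧ ((M0 ω, past Zn i ω), Xn ω i) = (u, x))
          = (∑ f' : Fin n → Option YT, pr p (fun ω => ((M0 ω, past Zn i ω), future Yn i ω)
              = (u, f') ∧ Xn ω i = x)) * ∑ z, W x (b, z) := by
        rw [pr_partition _ (future Yn i), Finset.sum_mul]
        refine Finset.sum_congr rfl fun f' _ => ?_
        have e5 : pr p (fun ω => (Yn ω i = b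
              ∧ ((M0 ω, past Zn i ω), Xn ω i) = (u, x)) ∧ future Yn i ω = f')
            = pr p (fun ω => ((M0 ω, past Zn i ω), future Yn i ω) = (u, f')
              ∧ Xn ω i = x ∧ Yn ω i = b) :=
          pr_congr fun ω => by simp only [Prod.mk.injEq]; tauto
        rw [e5, starY p M0 M1 Xn Yn Zn W hW hMem i (fun m0 m1 f pz => ((m0, pz), f)) (u, f') x b]
      rw [e1, e2, e3, e4, starY p M0 M1 Xn Yn Zn W hW hMem i (fun m0 m1 f pz => ((m0, pz), f)) (u, a) x b]
      ring
    have Z4 : CMI p (future Yn i) (fun ω => Zn ω i) (fun ω => ((M0 ω, past Zn i ω), Xn ω i)) = 0 := by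
      refine CMI_zero_of_indep hp (future Yn i) (fun ω => Zn ω i) (fun ω => ((M0 ω, past Zn i ω), Xn ω i)) ?_
      intro a b c
      obtain ⟨u, x⟩ := c
      have e1 : pr p (fun ω => future Yn i ω = a ∧ Zn ω i = b
            ∧ ((M0 ω, past Zn i ω), Xn ω i) = (u, x))
          = pr p (fun ω => ((M0 ω, past Zn i ω), future Yn i ω) = (u, a)
            ∧ Xn ω i = x ∧ Zn ω i = b) :=
        pr_congr fun ω => by simp only [Prod.mk.injEq]; tauto
      have e2 : pr p (fun ω => future Yn i ω = a
            ∧ ((M0 ω, past Zn i ω), Xn ω i) = (u, x))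
          = pr p (fun ω => ((M0 ω, past Zn i ω), future Yn i ω) = (u, a)
            ∧ Xn ω i = x) :=
        pr_congr fun ω => by simp only [Prod.mk.injEq]; tauto
      have e3 : pr p (fun ω => ((M0 ω, past Zn i ω), Xn ω i) = (u, x))
          = ∑ f' : Fin n → Option YT, pr p (fun ω => ((M0 ω, past Zn i ω), future Yn i ω)
            = (u, f') ∧ Xn ω i = x) := by
        rw [pr_partition _ (future Yn i)]
        exact Finset.sum_congr rfl fun f' _ =>
          pr_congr fun ω => by simp only [Prod.mk.injEq]; tauto
      have e4 : pr p (fun ω => Zn ω i = b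
            ∧ ((M0 ω, past Zn i ω), Xn ω i) = (u, x))
          = (∑ f' : Fin n → Option YT, pr p (fun ω => ((M0 ω, past Zn i ω), future Yn i ω)
              = (u, f') ∧ Xn ω i = x)) * ∑ y, W x (y, b) := by
        rw [pr_partition _ (future Yn i), Finset.sum_mul]
        refine Finset.sum_congr rfl fun f' _ => ?_
        have e5 : pr p (fun ω => (Zn ω i = b
              ∧ ((M0 ω, past Zn i ω), Xn ω i) = (u, x)) ∧ future Yn i ω = f')
            = pr p (fun ω => ((M0 ω, past Zn i ω), future Yn i ω) = (u, f')
              ∧ Xn ω i = x ∧ Zn ω i = b) :=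
          pr_congr fun ω => by simp only [Prod.mk.injEq]; tauto
        rw [e5, starZ p M0 M1 Xn Yn Zn W hW hMem i (fun m0 m1 f pz => ((m0, pz), f)) (u, f') x b]
      rw [e1, e2, e3, e4, starZ p M0 M1 Xn Yn Zn W hW hMem i (fun m0 m1 f pz => ((m0, pz), f)) (u, a) x b]
      ring
    -- less-noisy inequalities
    have A3 : CMI p (future Yn i) (fun ω => Zn ω i) (fun ω => (M0 ω, past Zn i ω)) ≤ CMI p (future Yn i) (fun ω => Yn ω i) (fun ω => (M0 ω, past Zn i ω)) := by
      refine LN_step hp hLN (fun ω => (M0 ω, past Zn i ω)) (future Yn i) (fun ω => Xn ω i) (fun ω => Yn ω i) (fun ω => Zn ω i) ?_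
      intro c a x y z
      have e1 : pr p (fun ω => (M0 ω, past Zn i ω) = c ∧ future Yn i ω = a
            ∧ Xn ω i = x ∧ Yn ω i = y ∧ Zn ω i = z)
          = pr p (fun ω => ((M0 ω, past Zn i ω), future Yn i ω) = (c, a)
            ∧ Xn ω i = x ∧ Yn ω i = y ∧ Zn ω i = z) :=
        pr_congr fun ω => by simp only [Prod.mk.injEq]; tauto
      have e2 : pr p (fun ω => (M0 ω, past Zn i ω) = c ∧ future Yn i ω = a ∧ Xn ω i = x)
          = pr p (fun ω => ((M0 ω, past Zn i ω), future Yn i ω) = (c, a) ∧ Xn ω i = x) :=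
        pr_congr fun ω => by simp only [Prod.mk.injEq]; tauto
      rw [e1, e2, star p M0 M1 Xn Yn Zn W hW hMem i (fun m0 m1 f pz => ((m0, pz), f)) (c, a) x y z]
    have A2 : CMI p (fun ω => Xn ω i) (fun ω => Zn ω i) (fun ω => ((M0 ω, future Yn i ω, past Zn i ω), M1 ω)) ≤ CMI p (fun ω => Xn ω i) (fun ω => Yn ω i) (fun ω => ((M0 ω, future Yn i ω, past Zn i ω), M1 ω)) := by
      refine LN_step hp hLN (fun ω => ((M0 ω, future Yn i ω, past Zn i ω), M1 ω)) (fun ω => Xn ω i) (fun ω => Xn ω i) (fun ω => Yn ω i) (fun ω => Zn ω i) ?_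
      intro c a x y z
      rcases eq_or_ne a x with hax | hax
      · subst hax
        have e1 : pr p (fun ω => ((M0 ω, future Yn i ω, past Zn i ω), M1 ω) = c
              ∧ Xn ω i = a ∧ Xn ω i = a ∧ Yn ω i = y ∧ Zn ω i = z)
            = pr p (fun ω => ((M0 ω, future Yn i ω, past Zn i ω), M1 ω) = c
              ∧ Xn ω i = a ∧ Yn ω i = y ∧ Zn ω i = z) :=
          pr_congr fun ω => by tauto
        have e2 : pr p (fun ω => ((M0 ω, future Yn i ω, past Zn i ω), M1 ω) = c
              ∧ Xn ω i = a ∧ Xn ω i = a)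
            = pr p (fun ω => ((M0 ω, future Yn i ω, past Zn i ω), M1 ω) = c
              ∧ Xn ω i = a) :=
          pr_congr fun ω => by tauto
        rw [e1, e2, star p M0 M1 Xn Yn Zn W hW hMem i (fun m0 m1 f pz => ((m0, f, pz), m1)) c a y z]
      · rw [pr_false (fun ω h => hax (h.2.1.symm.trans h.2.2.1)),
          pr_false (fun ω h => hax (h.2.1.symm.trans h.2.2)), zero_mul]
    linarith
  calc ∑ i : Fin n, (CMI p M1 (fun ω => Yn ω i) (fun ω => (M0 ω, future Yn i ω)) - CMI p M1 (fun ω => Zn ω i) (fun ω => (M0 ω, past Zn i ω)))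
      = ∑ i : Fin n, (CMI p M1 (fun ω => Yn ω i) (fun ω => (M0 ω, future Yn i ω, past Zn i ω)) - CMI p M1 (fun ω => Zn ω i) (fun ω => (M0 ω, future Yn i ω, past Zn i ω))) := reduce
    _ ≤ ∑ i : Fin n, (CMI p (fun ω => Xn ω i) (fun ω => Yn ω i) (fun ω => (M0 ω, past Zn i ω)) - CMI p (fun ω => Xn ω i) (fun ω => Zn ω i) (fun ω => (M0 ω, past Zn i ω))) := Finset.sum_le_sum main2
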